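/- arXiv:2503.16312 — 10 statements merged into one kernel-verified Lean document; each statement's English description precedes it below -/
import Mathlib

section
/- A vector u* minimizes φ(u) = Σ_{i,j} e^{u_i - u_j} A_{ij} over ℝⁿ if and only if the scaled matrix M = D(e^{u*}) A D(e^{-u*}) is balanced, i.e., its i-th row sum equals its i-th column sum for every i. -/
open Real Finset

noncomputable def rowSum {n : ℕ} (A : Matrix (Fin n) (Fin n) ℝ) (u : Fin n → ℝ) (j : Fin n) : ℝ :=
  ∑ i, Real.exp (u j - u i) * A j i

noncomputable def colSum {n : ℕ} (A : Matrix (Fin n) (Fin n) ℝ) (u : Fin n → ℝ) (j : Fin n) : ℝ :=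
  ∑ i, Real.exp (u i - u j) * A i j

noncomputable def potential {n : ℕ} (A : Matrix (Fin n) (Fin n) ℝ) (u : Fin n → ℝ) : ℝ :=
  ∑ i, ∑ j, Real.exp (u i - u j) * A i j

lemma convexity_bound {n : ℕ} (A : Matrix (Fin n) (Fin n) ℝ) (hA : ∀ i j, 0 ≤ A i j)
    (s u : Fin n → ℝ) :
    potential A s + ∑ i, ∑ j, (((u i - u j) - (s i - s j)) * (Real.exp (s i - s j) * A i j))
      ≤ potential A u := by
  have h : ∀ i j : Fin n,
      Real.exp (s i - s j) * A i j
        + ((u i - u j) - (s i - s j)) * (Real.exp (s i - s j) * A i j)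
        ≤ Real.exp (u i - u j) * A i j := by
    intro i j
    have h1 : Real.exp (s i - s j) * (1 + ((u i - u j) - (s i - s j)))
        ≤ Real.exp (u i - u j) := by
      have h2 := Real.add_one_le_exp ((u i - u j) - (s i - s j))
      have h3 : Real.exp (s i - s j) * (1 + ((u i - u j) - (s i - s j)))
          ≤ Real.exp (s i - s j) * Real.exp ((u i - u j) - (s i - s j)) := by
        apply mul_le_mul_of_nonneg_left (by linarith) (Real.exp_pos _).le
      have h4 : Real.exp (s i - s j) * Real.exp ((u i - u j) - (s i - s j))
          = Real.exp (u i - u j) := by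
        rw [← Real.exp_add]; ring_nf
      linarith
    nlinarith [mul_le_mul_of_nonneg_right h1 (hA i j)]
  unfold potential
  rw [← Finset.sum_add_distrib]
  apply Finset.sum_le_sum
  intro i _
  rw [← Finset.sum_add_distrib]
  exact Finset.sum_le_sum fun j _ => h i j

lemma grad_sum {n : ℕ} (A : Matrix (Fin n) (Fin n) ℝ) (s : Fin n → ℝ) (w : Fin n → ℝ) :
    ∑ i, ∑ j, (w i - w j) * (Real.exp (s i - s j) * A i j)
      = ∑ i, w i * (rowSum A s i - colSum A s i) := by
  have key : ∀ i j : Fin n, (w i - w j) * (Real.exp (s i - s j) * A i j)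
      = w i * (Real.exp (s i - s j) * A i j) - w j * (Real.exp (s i - s j) * A i j) := by
    intro i j; ring
  simp only [key, Finset.sum_sub_distrib]
  rw [Finset.sum_comm (f := fun i j => w j * (Real.exp (s i - s j) * A i j))]
  simp only [rowSum, colSum, mul_sub, Finset.mul_sum, Finset.sum_sub_distrib]

lemma potential_shift {n : ℕ} (A : Matrix (Fin n) (Fin n) ℝ) (s : Fin n → ℝ)
    (k : Fin n) (hk : A k k = 0) (t : ℝ) :
    potential A (fun i => s i + if i = k then t else 0)
      = potential A s + (Real.exp t - 1) * rowSum A s k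
          + (Real.exp (-t) - 1) * colSum A s k := by
  have key : ∀ i j : Fin n,
      Real.exp ((s i + if i = k then t else 0) - (s j + if j = k then t else 0)) * A i j
        = Real.exp (s i - s j) * A i j
          + (if i = k then (Real.exp t - 1) * (Real.exp (s i - s j) * A i j) else 0)
          + (if j = k then (Real.exp (-t) - 1) * (Real.exp (s i - s j) * A i j) else 0)
          + (if i = k then (if j = k then
              (Real.exp t - 1) * (Real.exp (-t) - 1) * (Real.exp (s i - s j) * A i j)
              else 0) else 0) := by
    intro i j
    have hinv : Real.exp t * Real.exp (-t) = 1 := by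
      rw [← Real.exp_add]; simp
    rcases eq_or_ne i k with hi | hi <;> rcases eq_or_ne j k with hj | hj
    · simp only [hi, hj, if_pos rfl, ite_true, if_true]
      have e1 : s k + t - (s k + t) = s k - s k := by ring
      rw [e1]
      linear_combination (-(Real.exp (s k - s k) * A k k)) * hinv
    · simp only [hi, if_pos rfl, ite_true, if_true, if_neg hj]
      have e1 : s k + t - (s j + 0) = t + (s k - s j) := by ring
      rw [e1, Real.exp_add]; ring
    · simp only [hj, if_pos rfl, ite_true, if_true, if_neg hi]
      have e1 : s i + 0 - (s k + t) = -t + (s i - s k) := by ring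
      rw [e1, Real.exp_add]; ring
    · simp only [if_neg hi, if_neg hj]
      have e1 : s i + 0 - (s j + 0) = s i - s j := by ring
      rw [e1]; ring
  unfold potential rowSum colSum
  simp only [key, Finset.sum_add_distrib]
  simp only [Finset.sum_ite_eq', Finset.mem_univ, if_true, hk, mul_zero, zero_mul,
    Finset.sum_const_zero, add_zero, Finset.mul_sum]
  ring_nf
  simp [Finset.sum_ite_eq', hk]
  ring

lemma exists_good_t (R S : ℝ) (hR : 0 ≤ R) (h : R < S) :
    ∃ t : ℝ, (Real.exp t - 1) * R + (Real.exp (-t) - 1) * S < 0 := by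
  have hS : 0 < S := lt_of_le_of_lt hR h
  set x : ℝ := 2 * S / (R + S) with hxdef
  have hRS : 0 < R + S := by linarith
  have hx0 : 0 < x := by positivity
  have hx1 : 1 < x := by
    rw [hxdef, lt_div_iff₀ hRS]; linarith
  have hx2 : R * x < S := by
    rw [hxdef, ← mul_div_assoc, div_lt_iff₀ hRS]
    nlinarith
  refine ⟨Real.log x, ?_⟩
  rw [Real.exp_log hx0, ← Real.log_inv, Real.exp_log (by positivity)]
  have hkey : ((x - 1) * R + (x⁻¹ - 1) * S) * x = (x - 1) * (R * x - S) := by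
    field_simp; ring
  nlinarith [mul_pos (sub_pos.mpr hx1) (sub_pos.mpr hx2)]

/--  minimizes  iff the scaled matrix  is balanced. -/
theorem isMinimizer_iff_balanced (n : ℕ) (A : Matrix (Fin n) (Fin n) ℝ)
    (hA : ∀ i j, 0 ≤ A i j) (hdiag : ∀ i, A i i = 0)
    (hbal : ∃ u : Fin n → ℝ, ∀ i, rowSum A u i = colSum A u i)
    (ustar : Fin n → ℝ) :
    (∀ u : Fin n → ℝ, potential A ustar ≤ potential A u) ↔
      (∀ i, rowSum A ustar i = colSum A ustar i) := by
  constructor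
  · intro hmin k
    by_contra hne
    set R := rowSum A ustar k with hRdef
    set S := colSum A ustar k with hSdef
    have hR : 0 ≤ R := Finset.sum_nonneg fun i _ =>
      mul_nonneg (Real.exp_pos _).le (hA _ _)
    have hS : 0 ≤ S := Finset.sum_nonneg fun i _ =>
      mul_nonneg (Real.exp_pos _).le (hA _ _)
    obtain ⟨t, ht⟩ : ∃ t : ℝ, (Real.exp t - 1) * R + (Real.exp (-t) - 1) * S < 0 := by
      rcases lt_or_gt_of_ne hne with h | h
      · exact exists_good_t R S hR h
      · obtain ⟨t', ht'⟩ := exists_good_t S R hS h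
        exact ⟨-t', by rw [neg_neg]; linarith⟩
    have hle := hmin (fun i => ustar i + if i = k then t else 0)
    rw [potential_shift A ustar k (hdiag k) t] at hle
    linarith
  · intro hb u
    have h1 := convexity_bound A hA ustar u
    have h2 : ∑ i, ∑ j, (((u i - u j) - (ustar i - ustar j))
        * (Real.exp (ustar i - ustar j) * A i j)) = 0 := by
      have hw : ∀ i j : Fin n, ((u i - u j) - (ustar i - ustar j))
          = (u i - ustar i) - (u j - ustar j) := by intro i j; ring
      calc ∑ i, ∑ j, (((u i - u j) - (ustar i - ustar j))
            * (Real.exp (ustar i - ustar j) * A i j))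
          = ∑ i, ∑ j, (((fun i => u i - ustar i) i - (fun i => u i - ustar i) j)
            * (Real.exp (ustar i - ustar j) * A i j)) := by
            simp only [hw]
        _ = ∑ i, (u i - ustar i) * (rowSum A ustar i - colSum A ustar i) :=
            grad_sum A ustar (fun i => u i - ustar i)
        _ = 0 := by simp [hb]
    linarith
end

section
/- If A is a balanceable nonnegative matrix and φ* = min_u φ(u) where φ(u) = Σ_{i,j} e^{u_i - u_j} A_{ij}, then φ(0)/φ* ≤ κ, where κ = (Σ_{ij} A_{ij}) / (min_{ij : A_{ij} ≠ 0} A_{ij}). -/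
open Real Finset

/-!
At a minimiser `u*` some edge `(i, j)` of `G_A` must satisfy `u*ⱼ ≤ u*ᵢ`: otherwise every
exponent `u*ᵢ - u*ⱼ` occurring in `φ(u*)` is negative and `φ(2u*) < φ(u*)`. That single term
gives `φ(u*) ≥ e^{u*ᵢ - u*ⱼ} Aᵢⱼ ≥ Aᵢⱼ ≥ min Aᵢⱼ`, while `φ(0) = Σ Aᵢⱼ`.
-/

namespace potential

variable {n : ℕ} {A : Matrix (Fin n) (Fin n) ℝ}

theorem zero_eq (A : Matrix (Fin n) (Fin n) ℝ) : potential A 0 = ∑ i, ∑ j, A i j := by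
  simp [potential]

theorem nonneg (hA : ∀ i j, 0 ≤ A i j) (u : Fin n → ℝ) : 0 ≤ potential A u :=
  sum_nonneg fun i _ => sum_nonneg fun j _ => mul_nonneg (exp_pos _).le (hA i j)

theorem exp_mul_le (hA : ∀ i j, 0 ≤ A i j) (u : Fin n → ℝ) (i j : Fin n) :
    exp (u i - u j) * A i j ≤ potential A u := by
  have hterm : ∀ i j, 0 ≤ exp (u i - u j) * A i j := fun i j => mul_nonneg (exp_pos _).le (hA i j)
  calc exp (u i - u j) * A i j ≤ ∑ j', exp (u i - u j') * A i j' :=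
        single_le_sum (fun j' _ => hterm i j') (mem_univ j)
    _ ≤ potential A u :=
        single_le_sum (fun i' _ => sum_nonneg fun j' _ => hterm i' j') (mem_univ i)

theorem two_mul_lt (hA : ∀ i j, 0 ≤ A i j) (hA0 : A ≠ 0) {u : Fin n → ℝ}
    (hdesc : ∀ i j, A i j ≠ 0 → u i < u j) :
    potential A (fun k => 2 * u k) < potential A u := by
  have hterm_le : ∀ i j, exp (2 * u i - 2 * u j) * A i j ≤ exp (u i - u j) * A i j := by
    intro i j
    rcases eq_or_ne (A i j) 0 with h | h
    · simp [h]
    · exact mul_le_mul_of_nonneg_right (exp_le_exp.mpr (by linarith [hdesc i j h])) (hA i j)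
  obtain ⟨i₀, j₀, hij⟩ : ∃ i j, A i j ≠ 0 := by
    by_contra! h
    exact hA0 (Matrix.ext h)
  have hterm_lt : exp (2 * u i₀ - 2 * u j₀) * A i₀ j₀ < exp (u i₀ - u j₀) * A i₀ j₀ := by
    have hpos : 0 < A i₀ j₀ := lt_of_le_of_ne (hA i₀ j₀) hij.symm
    exact mul_lt_mul_of_pos_right (exp_lt_exp.mpr (by linarith [hdesc i₀ j₀ hij])) hpos
  refine sum_lt_sum (fun i _ => sum_le_sum fun j _ => hterm_le i j) ⟨i₀, mem_univ _, ?_⟩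
  exact sum_lt_sum (fun j _ => hterm_le i₀ j) ⟨j₀, mem_univ _, hterm_lt⟩

theorem exists_ne_zero_le_of_isMin (hA : ∀ i j, 0 ≤ A i j) (hA0 : A ≠ 0) {u : Fin n → ℝ}
    (hmin : ∀ v, potential A u ≤ potential A v) :
    ∃ i j, A i j ≠ 0 ∧ u j ≤ u i := by
  by_contra! hdesc
  exact (two_mul_lt hA hA0 hdesc).not_ge (hmin _)

theorem le_of_isMin (hA : ∀ i j, 0 ≤ A i j) (hA0 : A ≠ 0) {u : Fin n → ℝ}
    (hmin : ∀ v, potential A u ≤ potential A v) {m : ℝ} (hm_le : ∀ i j, A i j ≠ 0 → m ≤ A i j) :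
    m ≤ potential A u := by
  obtain ⟨i, j, hij, hle⟩ := exists_ne_zero_le_of_isMin hA hA0 hmin
  calc m ≤ A i j := hm_le i j hij
    _ ≤ exp (u i - u j) * A i j :=
        le_mul_of_one_le_left (hA i j) (one_le_exp (sub_nonneg.mpr hle))
    _ ≤ potential A u := exp_mul_le hA u i j

end potential

theorem potential_zero_div_min_le_kappa_general (n : ℕ) (A : Matrix (Fin n) (Fin n) ℝ)
    (hA : ∀ i j, 0 ≤ A i j) (hA0 : A ≠ 0)
    (ustar : Fin n → ℝ) (hmin : ∀ u : Fin n → ℝ, potential A ustar ≤ potential A u)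
    (m : ℝ) (hm_pos : 0 < m)
    (hm_le : ∀ i j, A i j ≠ 0 → m ≤ A i j) :
    potential A 0 / potential A ustar ≤ (∑ i, ∑ j, A i j) / m := by
  rw [← potential.zero_eq]
  exact div_le_div_of_nonneg_left (potential.nonneg hA 0) hm_pos
    (potential.le_of_isMin hA hA0 hmin hm_le)

/-- Initial optimality gap bound:  where
. -/
theorem potential_zero_div_min_le_kappa (n : ℕ) (A : Matrix (Fin n) (Fin n) ℝ)
    (hA : ∀ i j, 0 ≤ A i j) (hA0 : A ≠ 0) (hdiag : ∀ i, A i i = 0)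
    (ustar : Fin n → ℝ) (hmin : ∀ u : Fin n → ℝ, potential A ustar ≤ potential A u)
    (m : ℝ) (hm_pos : 0 < m)
    (hm_le : ∀ i j, A i j ≠ 0 → m ≤ A i j)
    (hm_mem : ∃ i j, A i j ≠ 0 ∧ A i j = m) :
    potential A 0 / potential A ustar ≤ (∑ i, ∑ j, A i j) / m :=
  potential_zero_div_min_le_kappa_general n A hA hA0 ustar hmin m hm_pos hm_le
end

section
/- Suppose A is a balanceable nonnegative matrix whose associated directed graph G_A has diameter d and condition number κ = Σ_{ij} A_{ij} / min_{A_{ij}≠0} A_{ij}. If u ∈ ℝⁿ satisfies φ(u) ≤ φ(0), then there exists a minimizer u* of φ with ‖u - u*‖_∞ ≤ d · log κ. -/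
open Real Finset

/-- There is a directed path of length k from i to j in the graph of nonzero entries of A. -/
def hasPathLen {n : ℕ} (A : Matrix (Fin n) (Fin n) ℝ) (i j : Fin n) (k : ℕ) : Prop :=
  ∃ f : ℕ → Fin n, f 0 = i ∧ f k = j ∧ ∀ l < k, A (f l) (f (l + 1)) ≠ 0

/-- If φ(u) ≤ φ(0), then u is within ℓ∞-distance d·log κ of some minimizer of φ,
where d is the diameter of the graph of A and κ = (Σ A) / (min nonzero entry). -/
theorem dist_to_minimizer_le (n : ℕ) (A : Matrix (Fin n) (Fin n) ℝ)
    (hA : ∀ i j, 0 ≤ A i j) (hA0 : A ≠ 0) (hdiag : ∀ i, A i i = 0)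
    (d : ℕ) (hd : ∀ i j : Fin n, ∃ k ≤ d, hasPathLen A i j k)
    (m : ℝ) (hm_pos : 0 < m)
    (hm_le : ∀ i j, A i j ≠ 0 → m ≤ A i j)
    (hm_mem : ∃ i j, A i j ≠ 0 ∧ A i j = m)
    (u : Fin n → ℝ) (hu : potential A u ≤ potential A 0) :
    ∃ ustar : Fin n → ℝ, (∀ v : Fin n → ℝ, potential A ustar ≤ potential A v) ∧
      ∀ i, |u i - ustar i| ≤ d * Real.log ((∑ i, ∑ j, A i j) / m) := by
  obtain ⟨i0, j0, hij0, hmij⟩ := hm_mem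
  set S := ∑ i, ∑ j, A i j with hS
  have hterm_nonneg : ∀ (v : Fin n → ℝ) i j, 0 ≤ Real.exp (v i - v j) * A i j :=
    fun v i j => mul_nonneg (Real.exp_pos _).le (hA i j)
  have hpot0 : potential A 0 = S := by simp [potential, hS]
  have hSm : m ≤ S := by
    calc m = A i0 j0 := hmij.symm
    _ ≤ ∑ j, A i0 j := Finset.single_le_sum (fun j _ => hA i0 j) (mem_univ j0)
    _ ≤ S := Finset.single_le_sum (fun i _ => Finset.sum_nonneg fun j _ => hA i j)
        (mem_univ i0)
  have hSpos : 0 < S := lt_of_lt_of_le hm_pos hSm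
  set L := Real.log (S / m) with hL
  have hLnn : 0 ≤ L := Real.log_nonneg (by rw [le_div_iff₀ hm_pos]; linarith)
  set R := (d : ℝ) * L with hR
  have hRnn : 0 ≤ R := mul_nonneg (Nat.cast_nonneg d) hLnn
  -- edge bound
  have hedge : ∀ v : Fin n → ℝ, potential A v ≤ S → ∀ i j, A i j ≠ 0 → v i - v j ≤ L := by
    intro v hv i j hij
    have h1 : Real.exp (v i - v j) * A i j ≤ S := by
      refine le_trans ?_ hv
      calc Real.exp (v i - v j) * A i j ≤ ∑ j', Real.exp (v i - v j') * A i j' :=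
        Finset.single_le_sum (fun j' _ => hterm_nonneg v i j') (mem_univ j)
      _ ≤ potential A v := Finset.single_le_sum
          (fun i' _ => Finset.sum_nonneg fun j' _ => hterm_nonneg v i' j') (mem_univ i)
    have hm' : m ≤ A i j := hm_le i j hij
    have h2 : Real.exp (v i - v j) ≤ S / m := by
      rw [le_div_iff₀ hm_pos]
      calc Real.exp (v i - v j) * m ≤ Real.exp (v i - v j) * A i j :=
        mul_le_mul_of_nonneg_left hm' (Real.exp_pos _).le
      _ ≤ S := h1
    calc v i - v j = Real.log (Real.exp (v i - v j)) := (Real.log_exp _).symm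
    _ ≤ Real.log (S / m) := Real.log_le_log (Real.exp_pos _) h2
  -- difference bound via paths
  have hdiff : ∀ v : Fin n → ℝ, potential A v ≤ S → ∀ i j, v i - v j ≤ R := by
    intro v hv i j
    obtain ⟨k, hk, f, hf0, hfk, hpath⟩ := hd i j
    have key : ∀ l ≤ k, v (f 0) - v (f l) ≤ l * L := by
      intro l hl
      induction l with
      | zero => simp
      | succ l ih =>
        have hll : l < k := hl
        have h1 := ih (le_of_lt hll)
        have h2 : v (f l) - v (f (l + 1)) ≤ L := hedge v hv _ _ (hpath l hll)
        push_cast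
        linarith
    have hkey := key k le_rfl
    rw [hf0, hfk] at hkey
    calc v i - v j ≤ k * L := hkey
    _ ≤ R := mul_le_mul_of_nonneg_right (by exact_mod_cast hk) hLnn
  have hu' : potential A u ≤ S := hpot0 ▸ hu
  -- continuity
  have hcont : Continuous fun v : Fin n → ℝ => potential A v := by
    simp only [potential]
    exact continuous_finset_sum _ fun i _ => continuous_finset_sum _ fun j _ =>
      (Real.continuous_exp.comp ((continuous_apply i).sub (continuous_apply j))).mul
        continuous_const
  -- compact box
  set K : Set (Fin n → ℝ) := Set.Icc (fun _ => -R) (fun _ => R) with hK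
  have hKc : IsCompact K := isCompact_Icc
  have h0K : (0 : Fin n → ℝ) ∈ K :=
    Set.mem_Icc.mpr ⟨fun i => neg_nonpos.mpr hRnn, fun i => hRnn⟩
  obtain ⟨w0, hw0K, hw0min⟩ := hKc.exists_isMinOn ⟨0, h0K⟩ hcont.continuousOn
  have hw0min' : ∀ x ∈ K, potential A w0 ≤ potential A x := fun x hx => hw0min hx
  have hw0le : potential A w0 ≤ S := hpot0 ▸ hw0min' 0 h0K
  -- global minimality
  have hglobal : ∀ v : Fin n → ℝ, potential A w0 ≤ potential A v := by
    intro v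
    by_cases hv : potential A v ≤ S
    · set v' : Fin n → ℝ := fun j => v j - v i0 with hv'
      have hpe : potential A v' = potential A v := by
        simp [potential, hv', sub_sub_sub_cancel_right]
      have hv'K : v' ∈ K := by
        refine Set.mem_Icc.mpr ⟨fun j => ?_, fun j => ?_⟩
        · have h := hdiff v hv i0 j
          simp only [hv']
          linarith
        · have h := hdiff v hv j i0
          simp only [hv']
          linarith
      calc potential A w0 ≤ potential A v' := hw0min' v' hv'K
      _ = potential A v := hpe
    · exact le_trans hw0le (le_of_not_ge hv)
  -- choose the shift
  have hne : (Finset.univ : Finset (Fin n)).Nonempty := ⟨i0, mem_univ i0⟩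
  set w : Fin n → ℝ := fun i => u i - w0 i with hw
  set M := Finset.univ.sup' hne w with hM
  set μ := Finset.univ.inf' hne w with hμ
  obtain ⟨iM, _, hiM⟩ := Finset.exists_mem_eq_sup' hne w
  obtain ⟨iμ, _, hiμ⟩ := Finset.exists_mem_eq_inf' hne w
  have hMμ : M - μ ≤ 2 * R := by
    have h1 : u iM - u iμ ≤ R := hdiff u hu' iM iμ
    have h2 : w0 iμ - w0 iM ≤ R := hdiff w0 hw0le iμ iM
    rw [hM, hμ, hiM, hiμ]
    simp only [hw]
    linarith
  set c := (M + μ) / 2 with hc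
  refine ⟨fun i => w0 i + c, ?_, ?_⟩
  · intro v
    have hpe : potential A (fun i => w0 i + c) = potential A w0 := by
      simp [potential, add_sub_add_right_eq_sub]
    rw [hpe]
    exact hglobal v
  · intro i
    have h1 : w i ≤ M := Finset.le_sup' w (mem_univ i)
    have h2 : μ ≤ w i := Finset.inf'_le w (mem_univ i)
    have heq : u i - (w0 i + c) = w i - c := by simp only [hw]; ring
    rw [heq, abs_le]
    constructor <;> simp only [hc] <;> linarith
end

section
/- One step of Osborne's algorithm on coordinate j decreases the potential φ by exactly the squared difference of the square roots of the j-th row and column sums: φ(u') - φ(u) = -(√(r_j(u)) - √(c_j(u)))², where u' is obtained from u by the exact coordinate minimization of φ in coordinate j. -/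
open Real Finset

/-- One Osborne step on coordinate j decreases the potential by exactly
(sqrt r_j - sqrt c_j)^2. -/
theorem osborne_step_descent (n : ℕ) (A : Matrix (Fin n) (Fin n) ℝ)
    (hA : ∀ i j, 0 ≤ A i j) (hdiag : ∀ i, A i i = 0)
    (u : Fin n → ℝ) (j : Fin n)
    (hr : 0 < rowSum A u j) (hc : 0 < colSum A u j) :
    potential A (Function.update u j
        (u j + (1 / 2) * Real.log (colSum A u j) - (1 / 2) * Real.log (rowSum A u j)))
      - potential A u
      = -(Real.sqrt (rowSum A u j) - Real.sqrt (colSum A u j)) ^ 2 := by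
  set r := rowSum A u j with hrdef
  set c := colSum A u j with hcdef
  set h := (1 / 2) * Real.log c - (1 / 2) * Real.log r with hhdef
  set u' := Function.update u j (u j + (1 / 2) * Real.log c - (1 / 2) * Real.log r) with hu'def
  have huj : u' j = u j + h := by
    rw [hu'def, Function.update_self, hhdef]; ring
  have hui : ∀ i : Fin n, i ≠ j → u' i = u i := fun i hi => Function.update_of_ne hi _ _
  have F0 : ∀ v : Fin n → ℝ, Real.exp (v j - v j) * A j j = 0 := by
    intro v; rw [hdiag]; ring
  -- splitting of the potential
  have split : ∀ v : Fin n → ℝ,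
      potential A v = (∑ k, Real.exp (v j - v k) * A j k) + (∑ i, Real.exp (v i - v j) * A i j)
        + ∑ i ∈ Finset.univ.erase j, ∑ k ∈ Finset.univ.erase j, Real.exp (v i - v k) * A i k := by
    intro v
    have rowe : (∑ k, Real.exp (v j - v k) * A j k)
        = ∑ k ∈ Finset.univ.erase j, Real.exp (v j - v k) * A j k := by
      rw [← Finset.sum_erase_add _ _ (Finset.mem_univ j), F0 v, add_zero]
    unfold potential
    calc ∑ i, ∑ k, Real.exp (v i - v k) * A i k
        = ∑ i, (Real.exp (v i - v j) * A i j
            + ∑ k ∈ Finset.univ.erase j, Real.exp (v i - v k) * A i k) := by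
          refine Finset.sum_congr rfl fun i _ => ?_
          rw [add_comm, Finset.sum_erase_add _ _ (Finset.mem_univ j)]
      _ = (∑ i, Real.exp (v i - v j) * A i j)
            + ∑ i, ∑ k ∈ Finset.univ.erase j, Real.exp (v i - v k) * A i k :=
          Finset.sum_add_distrib
      _ = (∑ i, Real.exp (v i - v j) * A i j)
            + ((∑ k ∈ Finset.univ.erase j, Real.exp (v j - v k) * A j k)
              + ∑ i ∈ Finset.univ.erase j, ∑ k ∈ Finset.univ.erase j,
                  Real.exp (v i - v k) * A i k) := by
          rw [add_comm (∑ k ∈ Finset.univ.erase j, Real.exp (v j - v k) * A j k),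
            Finset.sum_erase_add _ _ (Finset.mem_univ j)]
      _ = _ := by rw [rowe]; ring
  have row' : (∑ k, Real.exp (u' j - u' k) * A j k) = Real.exp h * r := by
    rw [hrdef]
    unfold rowSum
    rw [Finset.mul_sum]
    refine Finset.sum_congr rfl fun k _ => ?_
    by_cases hk : k = j
    · subst hk; rw [hdiag]; ring
    · rw [hui k hk, huj, show u j + h - u k = h + (u j - u k) by ring, Real.exp_add, mul_assoc]
  have col' : (∑ i, Real.exp (u' i - u' j) * A i j) = Real.exp (-h) * c := by
    rw [hcdef]
    unfold colSum
    rw [Finset.mul_sum]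
    refine Finset.sum_congr rfl fun i _ => ?_
    by_cases hi : i = j
    · subst hi; rw [hdiag]; ring
    · rw [hui i hi, huj, show u i - (u j + h) = -h + (u i - u j) by ring, Real.exp_add, mul_assoc]
  have S' : (∑ i ∈ Finset.univ.erase j, ∑ k ∈ Finset.univ.erase j, Real.exp (u' i - u' k) * A i k)
      = ∑ i ∈ Finset.univ.erase j, ∑ k ∈ Finset.univ.erase j, Real.exp (u i - u k) * A i k := by
    refine Finset.sum_congr rfl fun i hi => Finset.sum_congr rfl fun k hk => ?_
    rw [hui i (Finset.mem_erase.mp hi).1, hui k (Finset.mem_erase.mp hk).1]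
  have esc : Real.exp ((1 / 2) * Real.log c) = Real.sqrt c := by
    rw [show (1 / 2) * Real.log c = Real.log (Real.sqrt c) by rw [Real.log_sqrt hc.le]; ring]
    exact Real.exp_log (Real.sqrt_pos.mpr hc)
  have esr : Real.exp ((1 / 2) * Real.log r) = Real.sqrt r := by
    rw [show (1 / 2) * Real.log r = Real.log (Real.sqrt r) by rw [Real.log_sqrt hr.le]; ring]
    exact Real.exp_log (Real.sqrt_pos.mpr hr)
  have key1 : Real.exp h * r = Real.sqrt r * Real.sqrt c := by
    rw [hhdef, Real.exp_sub, esc, esr, div_mul_eq_mul_div,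
      div_eq_iff (Real.sqrt_pos.mpr hr).ne']
    linear_combination -Real.sqrt c * Real.sq_sqrt hr.le
  have key2 : Real.exp (-h) * c = Real.sqrt r * Real.sqrt c := by
    rw [hhdef, neg_sub, Real.exp_sub, esc, esr, div_mul_eq_mul_div,
      div_eq_iff (Real.sqrt_pos.mpr hc).ne']
    linear_combination -Real.sqrt r * Real.sq_sqrt hc.le
  have hrow : (∑ k, Real.exp (u j - u k) * A j k) = r := by rw [hrdef]; rfl
  have hcol : (∑ i, Real.exp (u i - u j) * A i j) = c := by rw [hcdef]; rfl
  rw [split u', split u, row', col', S', key1, key2, hrow, hcol]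
  have h1 := Real.sq_sqrt hr.le
  have h2 := Real.sq_sqrt hc.le
  ring_nf
  nlinarith [h1, h2]
end

section
/- Over one full cycle of Osborne's algorithm updating coordinates j = 1, ..., n in order, the potential decreases by the sum of the per-coordinate imbalances at update time: φ(u_{k+1}) - φ(u_k) = -Σ_{j=1}^n (√(r_j(u_{k,j})) - √(c_j(u_{k,j})))², where u_{k,j} is the iterate right before coordinate j is updated in cycle k. -/
open Real Finset

/-- One Osborne update: balance the j-th row/column pair. -/
noncomputable def osborneUpdate {n : ℕ} (A : Matrix (Fin n) (Fin n) ℝ)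
    (u : Fin n → ℝ) (j : Fin n) : Fin n → ℝ :=
  Function.update u j
    (u j + (1 / 2) * (Real.log (colSum A u j) - Real.log (rowSum A u j)))

/-!
Shifting the single coordinate `u j` by `t` multiplies `r_j` by `e^t` and `c_j` by `e^{-t}`, and
leaves every entry of `M(u)` outside row and column `j` unchanged (the diagonal entry vanishes), so
`φ` changes by `(e^t - 1) r_j + (e^{-t} - 1) c_j`. Osborne's step takes `e^t = √(c_j / r_j)`, which
turns this change into `-(√r_j - √c_j)²`; summing over the cycle telescopes.
-/

section Update

variable {n : ℕ} {A : Matrix (Fin n) (Fin n) ℝ} (u : Fin n → ℝ) (j : Fin n) (t : ℝ)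

theorem potential_eq_rowSum_add_colSum_add (hjj : A j j = 0) :
    potential A u = rowSum A u j + colSum A u j +
      ∑ i ∈ univ.erase j, ∑ m ∈ univ.erase j, exp (u i - u m) * A i m := by
  have hcol : colSum A u j = ∑ i ∈ univ.erase j, exp (u i - u j) * A i j := by
    rw [colSum, ← add_sum_erase _ _ (mem_univ j), hjj, mul_zero, zero_add]
  simp only [potential, rowSum, hcol, ← add_sum_erase _ _ (mem_univ j), sum_add_distrib]
  ring

theorem rowSum_update_add (hjj : A j j = 0) :
    rowSum A (Function.update u j (u j + t)) j = exp t * rowSum A u j := by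
  simp only [rowSum, mul_sum]
  refine sum_congr rfl fun i _ => ?_
  rcases eq_or_ne i j with rfl | hi
  · simp [hjj]
  · rw [Function.update_self, Function.update_of_ne hi, add_sub_right_comm, exp_add]
    ring

theorem colSum_update_add (hjj : A j j = 0) :
    colSum A (Function.update u j (u j + t)) j = exp (-t) * colSum A u j := by
  simp only [colSum, mul_sum]
  refine sum_congr rfl fun i _ => ?_
  rcases eq_or_ne i j with rfl | hi
  · simp [hjj]
  · rw [Function.update_self, Function.update_of_ne hi, sub_add_eq_sub_sub, sub_eq_add_neg _ t,
      exp_add]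
    ring

theorem potential_update_add (hjj : A j j = 0) :
    potential A (Function.update u j (u j + t)) - potential A u =
      (exp t - 1) * rowSum A u j + (exp (-t) - 1) * colSum A u j := by
  have hrest : ∀ i ∈ univ.erase j, Function.update u j (u j + t) i = u i :=
    fun i hi => Function.update_of_ne (ne_of_mem_erase hi) _ _
  rw [potential_eq_rowSum_add_colSum_add _ j hjj, potential_eq_rowSum_add_colSum_add u j hjj,
    rowSum_update_add u j t hjj, colSum_update_add u j t hjj]
  have : ∑ i ∈ univ.erase j, ∑ m ∈ univ.erase j,
        exp (Function.update u j (u j + t) i - Function.update u j (u j + t) m) * A i m =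
      ∑ i ∈ univ.erase j, ∑ m ∈ univ.erase j, exp (u i - u m) * A i m :=
    sum_congr rfl fun i hi => sum_congr rfl fun m hm => by rw [hrest i hi, hrest m hm]
  rw [this]
  ring

end Update

theorem exp_half_mul_log_sub_log {r c : ℝ} (hr : 0 < r) (hc : 0 < c) :
    exp (1 / 2 * (log c - log r)) = √c / √r := by
  rw [show 1 / 2 * (log c - log r) = log √c - log √r by rw [log_sqrt hc.le, log_sqrt hr.le]; ring,
    exp_sub, exp_log (sqrt_pos.2 hc), exp_log (sqrt_pos.2 hr)]

theorem rescale_gain_eq_neg_sq {r c t : ℝ} (hr : 0 < r) (hc : 0 < c) (ht : exp t = √c / √r) :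
    (exp t - 1) * r + (exp (-t) - 1) * c = -(√r - √c) ^ 2 := by
  have hsr : √r ≠ 0 := (sqrt_pos.2 hr).ne'
  have hsc : √c ≠ 0 := (sqrt_pos.2 hc).ne'
  rw [exp_neg, ht, inv_div]
  field_simp
  linear_combination (-√c * (√c - √r)) * sq_sqrt hr.le + (-√r * (√r - √c)) * sq_sqrt hc.le

theorem potential_osborneUpdate_sub {n : ℕ} {A : Matrix (Fin n) (Fin n) ℝ} (u : Fin n → ℝ)
    (j : Fin n) (hjj : A j j = 0) (hr : 0 < rowSum A u j) (hc : 0 < colSum A u j) :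
    potential A (osborneUpdate A u j) - potential A u =
      -(√(rowSum A u j) - √(colSum A u j)) ^ 2 :=
  (potential_update_add u j _ hjj).trans
    (rescale_gain_eq_neg_sq hr hc (exp_half_mul_log_sub_log hr hc))

theorem osborne_cycle_descent_general (n : ℕ) (A : Matrix (Fin n) (Fin n) ℝ)
    (hdiag : ∀ i, A i i = 0)
    (v : ℕ → Fin n → ℝ)
    (hv : ∀ j : Fin n, v (j.val + 1) = osborneUpdate A (v j.val) j)
    (hpos : ∀ j : Fin n, 0 < rowSum A (v j.val) j ∧ 0 < colSum A (v j.val) j) :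
    potential A (v n) - potential A (v 0)
      = -∑ j : Fin n,
          (Real.sqrt (rowSum A (v j.val) j) - Real.sqrt (colSum A (v j.val) j)) ^ 2 := by
  rw [← sum_range_sub (fun k => potential A (v k)),
    ← Fin.sum_univ_eq_sum_range (fun k => potential A (v (k + 1)) - potential A (v k)),
    ← sum_neg_distrib]
  refine sum_congr rfl fun j _ => ?_
  rw [hv j]
  exact potential_osborneUpdate_sub (v j) j (hdiag j) (hpos j).1 (hpos j).2

/-- Descent Lemma: over a full cycle of Osborne's algorithm, the potential decreases by
the sum over j of (sqrt r_j - sqrt c_j)^2 evaluated right before coordinate j is updated. -/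
theorem osborne_cycle_descent (n : ℕ) (A : Matrix (Fin n) (Fin n) ℝ)
    (hA : ∀ i j, 0 ≤ A i j) (hdiag : ∀ i, A i i = 0)
    (v : ℕ → Fin n → ℝ)
    (hv : ∀ j : Fin n, v (j.val + 1) = osborneUpdate A (v j.val) j)
    (hpos : ∀ j : Fin n, 0 < rowSum A (v j.val) j ∧ 0 < colSum A (v j.val) j) :
    potential A (v n) - potential A (v 0)
      = -∑ j : Fin n,
          (Real.sqrt (rowSum A (v j.val) j) - Real.sqrt (colSum A (v j.val) j)) ^ 2 :=
  osborne_cycle_descent_general n A hdiag v hv hpos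
end

section
/- (Imbalance Lemma) After completing one full cycle of Osborne's algorithm, the ℓ₁ norm of the gradient of φ at the end-of-cycle iterate u_{k+1} is bounded by the sum of the row/column imbalances at the times the coordinates were updated within the cycle: ‖∇φ(u_{k+1})‖₁ ≤ Σ_{j=2}^n |r_j(u_{k,j}) - c_j(u_{k,j})|. -/
open Real Finset

/-!
After coordinate `j` is updated its imbalance `r_j - c_j` is zero. A later update of
coordinate `l` by a step `d` moves it by at most
`|e^{-d} - 1| e^{u_j - u_l} A_{jl} + |e^d - 1| e^{u_l - u_j} A_{lj}`.
Summed over all `j`, these bounds give `|e^{-d} - 1| c_l + |e^d - 1| r_l`, which equals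
`|r_l - c_l|` because the Osborne step satisfies `e^{2d} r_l = c_l`. Exchanging the order of
summation, the update of `l` pays at most `|r_l - c_l|` for the coordinates `j < l`, and the
first update pays nothing.
-/

open Function

section Osborne

variable {n : ℕ} (A : Matrix (Fin n) (Fin n) ℝ)

noncomputable def osborneStep (u : Fin n → ℝ) (j : Fin n) : ℝ :=
  (1 / 2) * (log (colSum A u j) - log (rowSum A u j))

noncomputable def imbalance (u : Fin n → ℝ) (j : Fin n) : ℝ :=
  rowSum A u j - colSum A u j

noncomputable def imbalanceShiftBound (u : Fin n → ℝ) (l : Fin n) (d : ℝ) (j : Fin n) : ℝ :=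
  |exp (-d) - 1| * (exp (u j - u l) * A j l) + |exp d - 1| * (exp (u l - u j) * A l j)

lemma osborneUpdate_eq (u : Fin n → ℝ) (j : Fin n) :
    osborneUpdate A u j = update u j (u j + osborneStep A u j) := rfl

lemma rowSum_update_sub_of_ne (u : Fin n → ℝ) {l j : Fin n} (hlj : l ≠ j) (w : ℝ) :
    rowSum A (update u l w) j - rowSum A u j = (exp (u j - w) - exp (u j - u l)) * A j l := by
  rw [rowSum, rowSum, ← sum_sub_distrib, sum_eq_single l]
  · simp [update_of_ne hlj.symm, sub_mul]
  · intro i _ hil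
    simp [update_of_ne hil, update_of_ne hlj.symm]
  · simp

lemma colSum_update_sub_of_ne (u : Fin n → ℝ) {l j : Fin n} (hlj : l ≠ j) (w : ℝ) :
    colSum A (update u l w) j - colSum A u j = (exp (w - u j) - exp (u l - u j)) * A l j := by
  rw [colSum, colSum, ← sum_sub_distrib, sum_eq_single l]
  · simp [update_of_ne hlj.symm, sub_mul]
  · intro i _ hil
    simp [update_of_ne hil, update_of_ne hlj.symm]
  · simp

lemma rowSum_update_self (u : Fin n → ℝ) {j : Fin n} (hdiag : A j j = 0) (d : ℝ) :
    rowSum A (update u j (u j + d)) j = exp d * rowSum A u j := by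
  rw [rowSum, rowSum, mul_sum]
  refine sum_congr rfl fun i _ => ?_
  rcases eq_or_ne i j with rfl | hij
  · simp [hdiag]
  · rw [update_self, update_of_ne hij, add_sub_right_comm, exp_add]
    ring

lemma colSum_update_self (u : Fin n → ℝ) {j : Fin n} (hdiag : A j j = 0) (d : ℝ) :
    colSum A (update u j (u j + d)) j = exp (-d) * colSum A u j := by
  rw [colSum, colSum, mul_sum]
  refine sum_congr rfl fun i _ => ?_
  rcases eq_or_ne i j with rfl | hij
  · simp [hdiag]
  · rw [update_self, update_of_ne hij, sub_add_eq_sub_sub, sub_eq_neg_add (u i - u j), exp_add]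
    ring

lemma exp_osborneStep_sq_mul (u : Fin n → ℝ) {j : Fin n} (hr : 0 < rowSum A u j)
    (hc : 0 < colSum A u j) :
    exp (osborneStep A u j) ^ 2 * rowSum A u j = colSum A u j := by
  rw [← exp_nat_mul, osborneStep, ← mul_assoc, show ((2 : ℕ) : ℝ) * (1 / 2) = 1 by norm_num,
    one_mul, exp_sub, exp_log hr, exp_log hc, div_mul_cancel₀ _ hr.ne']

lemma imbalance_osborneUpdate_self (u : Fin n → ℝ) {j : Fin n} (hdiag : A j j = 0)
    (hr : 0 < rowSum A u j) (hc : 0 < colSum A u j) :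
    imbalance A (osborneUpdate A u j) j = 0 := by
  rw [imbalance, osborneUpdate_eq, rowSum_update_self A u hdiag, colSum_update_self A u hdiag,
    ← exp_osborneStep_sq_mul A u hr hc, exp_neg]
  field_simp
  ring

lemma imbalance_update_sub_of_ne (u : Fin n → ℝ) {l j : Fin n} (hlj : l ≠ j) (d : ℝ) :
    imbalance A (update u l (u l + d)) j - imbalance A u j
      = (exp (-d) - 1) * (exp (u j - u l) * A j l)
        - (exp d - 1) * (exp (u l - u j) * A l j) := by
  have hrow := rowSum_update_sub_of_ne A u hlj (u l + d)
  have hcol := colSum_update_sub_of_ne A u hlj (u l + d)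
  rw [show u j - (u l + d) = -d + (u j - u l) by ring, exp_add] at hrow
  rw [show u l + d - u j = d + (u l - u j) by ring, exp_add] at hcol
  rw [imbalance, imbalance]
  linear_combination hrow - hcol

variable {A}

lemma imbalanceShiftBound_nonneg (hA : ∀ i j, 0 ≤ A i j) (u : Fin n → ℝ) (l : Fin n) (d : ℝ)
    (j : Fin n) : 0 ≤ imbalanceShiftBound A u l d j := by
  unfold imbalanceShiftBound
  have := hA j l
  have := hA l j
  positivity

lemma abs_imbalance_update_sub_le (hA : ∀ i j, 0 ≤ A i j) (u : Fin n → ℝ) {l j : Fin n}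
    (hlj : l ≠ j) (d : ℝ) :
    |imbalance A (update u l (u l + d)) j - imbalance A u j| ≤ imbalanceShiftBound A u l d j := by
  rw [imbalance_update_sub_of_ne A u hlj d, imbalanceShiftBound]
  refine (abs_sub _ _).trans_eq ?_
  rw [abs_mul (exp (-d) - 1), abs_mul (exp d - 1),
    abs_of_nonneg (mul_nonneg (exp_pos _).le (hA j l)),
    abs_of_nonneg (mul_nonneg (exp_pos _).le (hA l j))]

variable (A)

lemma sum_imbalanceShiftBound (u : Fin n → ℝ) (l : Fin n) (d : ℝ) :
    ∑ j, imbalanceShiftBound A u l d j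
      = |exp (-d) - 1| * colSum A u l + |exp d - 1| * rowSum A u l := by
  simp only [imbalanceShiftBound, sum_add_distrib, ← mul_sum, colSum, rowSum]

lemma sum_imbalanceShiftBound_osborneStep (u : Fin n → ℝ) {l : Fin n} (hr : 0 < rowSum A u l)
    (hc : 0 < colSum A u l) :
    ∑ j, imbalanceShiftBound A u l (osborneStep A u l) j = |imbalance A u l| := by
  rw [sum_imbalanceShiftBound, imbalance, ← exp_osborneStep_sq_mul A u hr hc, exp_neg]
  set E := exp (osborneStep A u l)
  set r := rowSum A u l
  have hE : 0 < E := exp_pos _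
  rcases le_total E 1 with hE1 | hE1
  · have : 1 ≤ E⁻¹ := one_le_inv_iff₀.2 ⟨hE, hE1⟩
    have : 0 ≤ r - E ^ 2 * r := by nlinarith [pow_le_one₀ (n := 2) hE.le hE1]
    rw [abs_of_nonneg (by linarith), abs_of_nonpos (by linarith), abs_of_nonneg this]
    field_simp
    ring
  · have : E⁻¹ ≤ 1 := inv_le_one_of_one_le₀ hE1
    have : r - E ^ 2 * r ≤ 0 := by nlinarith [one_le_pow₀ (n := 2) hE1]
    rw [abs_of_nonpos (by linarith), abs_of_nonneg (by linarith), abs_of_nonpos this]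
    field_simp
    ring

variable {A}

lemma sum_Iio_imbalanceShiftBound_le (hA : ∀ i j, 0 ≤ A i j) (u : Fin n → ℝ) {l : Fin n}
    (hr : 0 < rowSum A u l) (hc : 0 < colSum A u l) :
    ∑ j ∈ Iio l, imbalanceShiftBound A u l (osborneStep A u l) j ≤ |imbalance A u l| :=
  (sum_le_sum_of_subset_of_nonneg (subset_univ _) fun j _ _ =>
    imbalanceShiftBound_nonneg hA u l _ j).trans_eq (sum_imbalanceShiftBound_osborneStep A u hr hc)

lemma Fin.sum_Ioi_eq_sum_Ico {M : Type*} [AddCommMonoid M] (j : Fin n) (G : ℕ → M) :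
    ∑ l ∈ Ioi j, G l = ∑ m ∈ Ico ((j : ℕ) + 1) n, G m := by
  rw [Finset.Ico_add_one_left_eq_Ioo, ← Fin.map_valEmbedding_Ioi, sum_map]
  rfl

lemma abs_imbalance_cycle_le (hA : ∀ i j, 0 ≤ A i j) (v : ℕ → Fin n → ℝ)
    (hv : ∀ l : Fin n, v (l + 1) = osborneUpdate A (v l) l) {j : Fin n} (hdiag : A j j = 0)
    (hr : 0 < rowSum A (v j) j) (hc : 0 < colSum A (v j) j) :
    |imbalance A (v n) j|
      ≤ ∑ l ∈ Ioi j, imbalanceShiftBound A (v l) l (osborneStep A (v l) l) j := by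
  set f : ℕ → ℝ := fun m => imbalance A (v m) j
  have hbalanced : f (j + 1) = 0 := by
    simp only [f, hv, imbalance_osborneUpdate_self A _ hdiag hr hc]
  have hstep (l : Fin n) (hjl : j < l) :
      |f l - f (l + 1)| ≤ imbalanceShiftBound A (v l) l (osborneStep A (v l) l) j := by
    rw [abs_sub_comm]
    simp only [f, hv, osborneUpdate_eq]
    exact abs_imbalance_update_sub_le hA _ hjl.ne' _
  calc |f n| = dist (f (j + 1)) (f n) := by rw [Real.dist_eq, hbalanced, zero_sub, abs_neg]
    _ ≤ ∑ m ∈ Ico ((j : ℕ) + 1) n, dist (f m) (f (m + 1)) := dist_le_Ico_sum_dist f j.isLt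
    _ = ∑ l ∈ Ioi j, |f l - f (l + 1)| := (Fin.sum_Ioi_eq_sum_Ico j _).symm
    _ ≤ _ := sum_le_sum fun l hl => hstep l (mem_Ioi.1 hl)

end Osborne

/-- Imbalance Lemma: the l1 norm of the gradient of φ at the end of a cycle is bounded by
the sum over coordinates j (other than the first) of the row/column imbalance of the j-th
pair right before it was updated within the cycle. -/
theorem osborne_cycle_imbalance (n : ℕ) (hn : 0 < n) (A : Matrix (Fin n) (Fin n) ℝ)
    (hA : ∀ i j, 0 ≤ A i j) (hdiag : ∀ i, A i i = 0)
    (v : ℕ → Fin n → ℝ)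
    (hv : ∀ j : Fin n, v (j.val + 1) = osborneUpdate A (v j.val) j)
    (hpos : ∀ j : Fin n, 0 < rowSum A (v j.val) j ∧ 0 < colSum A (v j.val) j) :
    ∑ j : Fin n, |rowSum A (v n) j - colSum A (v n) j|
      ≤ ∑ j ∈ Finset.univ.filter (fun j : Fin n => (⟨0, hn⟩ : Fin n) < j),
          |rowSum A (v j.val) j - colSum A (v j.val) j| := by
  set F : Fin n → Fin n → ℝ := fun l j => imbalanceShiftBound A (v l) l (osborneStep A (v l) l) j
  have hfirst (l : Fin n) (hl : ∑ j ∈ Iio l, F l j ≠ 0) : (⟨0, hn⟩ : Fin n) < l := by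
    obtain ⟨j, hj, -⟩ := exists_ne_zero_of_sum_ne_zero hl
    exact Fin.lt_def.2 ((Nat.zero_le _).trans_lt (Fin.lt_def.1 (mem_Iio.1 hj)))
  calc ∑ j, |imbalance A (v n) j|
      ≤ ∑ j, ∑ l ∈ Ioi j, F l j :=
        sum_le_sum fun j _ => abs_imbalance_cycle_le hA v hv (hdiag j) (hpos j).1 (hpos j).2
    _ = ∑ l, ∑ j ∈ Iio l, F l j := sum_comm' (by simp)
    _ = ∑ l ∈ univ.filter (fun l : Fin n => (⟨0, hn⟩ : Fin n) < l), ∑ j ∈ Iio l, F l j :=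
        (sum_filter_of_ne fun l _ hl => hfirst l hl).symm
    _ ≤ _ := sum_le_sum fun l _ => sum_Iio_imbalanceShiftBound_le hA (v l) (hpos l).1 (hpos l).2
end

section
/- (Within-cycle sum bound) In Osborne's cyclic algorithm, for every coordinate j and cycle k: r_j(u_{k,j}) ≤ √(r_j(u_{k,j})/c_j(u_{k,j})) · r_j(u_{k+1}) + r_j(u_k), and symmetrically c_j(u_{k,j}) ≤ √(c_j(u_{k,j})/r_j(u_{k,j})) · c_j(u_{k+1}) + c_j(u_k). -/
open Real Finset

/-- Within-cycle sum bound: the j-th row (resp. column) sum at the time of its update is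
bounded by the corresponding end-of-cycle sum, scaled by the update ratio, plus the
start-of-cycle sum. -/
theorem osborne_within_cycle_sum_bound (n : ℕ) (A : Matrix (Fin n) (Fin n) ℝ)
    (hA : ∀ i j, 0 ≤ A i j) (hdiag : ∀ i, A i i = 0)
    (v : ℕ → Fin n → ℝ)
    (hv : ∀ j : Fin n, v (j.val + 1) = osborneUpdate A (v j.val) j)
    (hpos : ∀ j : Fin n, 0 < rowSum A (v j.val) j ∧ 0 < colSum A (v j.val) j)
    (j : Fin n) :
    rowSum A (v j.val) j
        ≤ Real.sqrt (rowSum A (v j.val) j / colSum A (v j.val) j) * rowSum A (v n) j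
          + rowSum A (v 0) j ∧
    colSum A (v j.val) j
        ≤ Real.sqrt (colSum A (v j.val) j / rowSum A (v j.val) j) * colSum A (v n) j
          + colSum A (v 0) j := by
  obtain ⟨hr, hc⟩ := hpos j
  have stepEq : ∀ (m : Fin n) (i : Fin n), i ≠ m → v (m.val + 1) i = v m.val i := by
    intro m i h
    rw [hv m, osborneUpdate, Function.update_of_ne h]
  have stable : ∀ (i : Fin n) (b a : ℕ), a ≤ b → b ≤ n →
      (∀ m : Fin n, a ≤ m.val → m.val < b → m ≠ i) → v a i = v b i := by
    intro i b
    induction b with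
    | zero =>
      intro a hab _ _
      interval_cases a
      rfl
    | succ b ih =>
      intro a hab hb h
      rcases Nat.lt_or_ge a (b + 1) with hlt | hge
      · have hbn : b < n := by omega
        have h1 : v a i = v b i := by
          refine ih a (by omega) (by omega) ?_
          intro m hm1 hm2
          exact h m hm1 (by omega)
        have h2 : v (b + 1) i = v b i :=
          stepEq ⟨b, hbn⟩ i (Ne.symm (h ⟨b, hbn⟩ (by simpa using by omega) (by simp)))
        rw [h1, h2]
      · have : a = b + 1 := by omega
        rw [this]
  have hjn : j.val < n := j.isLt
  -- coordinates i < j are frozen from time j to time n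
  have hlt : ∀ i : Fin n, i.val < j.val → v j.val i = v n i := by
    intro i hi
    refine stable i n j.val (by omega) le_rfl ?_
    intro m hm1 _
    exact fun hmi => by rw [hmi] at hm1; omega
  -- coordinates i ≥ j are frozen from time 0 to time j
  have hge : ∀ i : Fin n, j.val ≤ i.val → v 0 i = v j.val i := by
    intro i hi
    refine stable i j.val 0 (Nat.zero_le _) (by omega) ?_
    intro m _ hm2
    exact fun hmi => by rw [hmi] at hm2; omega
  -- coordinate j is frozen from time j+1 to time n
  have h3 : v (j.val + 1) j = v n j := by
    refine stable j n (j.val + 1) (by omega) le_rfl ?_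
    intro m hm1 _
    exact fun hmj => by rw [hmj] at hm1; omega
  have h4 : v (j.val + 1) j = v j.val j
      + (1 / 2) * (Real.log (colSum A (v j.val) j) - Real.log (rowSum A (v j.val) j)) := by
    rw [hv j, osborneUpdate, Function.update_self]
  have hvn : v n j = v j.val j
      + (1 / 2) * (Real.log (colSum A (v j.val) j) - Real.log (rowSum A (v j.val) j)) := by
    rw [← h3, h4]
  set r := rowSum A (v j.val) j with hrdef
  set c := colSum A (v j.val) j with hcdef
  have key1 : Real.exp (v j.val j - v n j) = Real.sqrt (r / c) := by
    rw [Real.sqrt_eq_rpow, Real.rpow_def_of_pos (div_pos hr hc),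
      Real.log_div hr.ne' hc.ne', hvn]
    ring_nf
  have key2 : Real.exp (v n j - v j.val j) = Real.sqrt (c / r) := by
    rw [Real.sqrt_eq_rpow, Real.rpow_def_of_pos (div_pos hc hr),
      Real.log_div hc.ne' hr.ne', hvn]
    ring_nf
  constructor
  · show rowSum A (v j.val) j ≤ _
    have main : ∑ i, Real.exp (v j.val j - v j.val i) * A j i
        ≤ Real.sqrt (r / c) * ∑ i, Real.exp (v n j - v n i) * A j i
          + ∑ i, Real.exp (v 0 j - v 0 i) * A j i := by
      rw [Finset.mul_sum, ← Finset.sum_add_distrib]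
      apply Finset.sum_le_sum
      intro i _
      by_cases hij : i.val < j.val
      · have heq : Real.exp (v j.val j - v j.val i) * A j i
            = Real.sqrt (r / c) * (Real.exp (v n j - v n i) * A j i) := by
          rw [hlt i hij, ← key1, ← mul_assoc, ← Real.exp_add]
          ring_nf
        rw [heq]
        have : 0 ≤ Real.exp (v 0 j - v 0 i) * A j i :=
          mul_nonneg (Real.exp_pos _).le (hA j i)
        linarith
      · push_neg at hij
        have heq : Real.exp (v j.val j - v j.val i) * A j i
            = Real.exp (v 0 j - v 0 i) * A j i := by
          rw [hge i hij, hge j le_rfl]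
        rw [heq]
        have : 0 ≤ Real.sqrt (r / c) * (Real.exp (v n j - v n i) * A j i) :=
          mul_nonneg (Real.sqrt_nonneg _) (mul_nonneg (Real.exp_pos _).le (hA j i))
        linarith
    exact main
  · show colSum A (v j.val) j ≤ _
    have main : ∑ i, Real.exp (v j.val i - v j.val j) * A i j
        ≤ Real.sqrt (c / r) * ∑ i, Real.exp (v n i - v n j) * A i j
          + ∑ i, Real.exp (v 0 i - v 0 j) * A i j := by
      rw [Finset.mul_sum, ← Finset.sum_add_distrib]
      apply Finset.sum_le_sum
      intro i _
      by_cases hij : i.val < j.val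
      · have heq : Real.exp (v j.val i - v j.val j) * A i j
            = Real.sqrt (c / r) * (Real.exp (v n i - v n j) * A i j) := by
          rw [hlt i hij, ← key2, ← mul_assoc, ← Real.exp_add]
          ring_nf
        rw [heq]
        have : 0 ≤ Real.exp (v 0 i - v 0 j) * A i j :=
          mul_nonneg (Real.exp_pos _).le (hA i j)
        linarith
      · push_neg at hij
        have heq : Real.exp (v j.val i - v j.val j) * A i j
            = Real.exp (v 0 i - v 0 j) * A i j := by
          rw [hge i hij, hge j le_rfl]
        rw [heq]
        have : 0 ≤ Real.sqrt (c / r) * (Real.exp (v n i - v n j) * A i j) :=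
          mul_nonneg (Real.sqrt_nonneg _) (mul_nonneg (Real.exp_pos _).le (hA i j))
        linarith
    exact main
end

section
/- (Weak convergence bound) Given a balanceable nonnegative matrix A and ε ∈ (0,1), Osborne's cyclic algorithm started at any u_0 finds an iterate u_t with ‖∇φ(u_t)‖₁/φ(u_t) ≤ ε within O(log₂(φ(u_0)/φ*) / ε²) cycles, where φ* = min φ. -/
open Real Finset

/-- One full cycle of Osborne's algorithm, updating coordinates 0, 1, ..., n-1 in order. -/
noncomputable def osborneCycle {n : ℕ} (A : Matrix (Fin n) (Fin n) ℝ)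
    (u : Fin n → ℝ) : Fin n → ℝ :=
  (List.finRange n).foldl (fun w j => osborneUpdate A w j) u

/-- End-of-cycle iterates of cyclic Osborne started at u0. -/
noncomputable def osborneIter {n : ℕ} (A : Matrix (Fin n) (Fin n) ℝ)
    (u0 : Fin n → ℝ) (k : ℕ) : Fin n → ℝ :=
  (osborneCycle A)^[k] u0

/-!
Updating coordinate `j` balances row and column `j`, lowers `φ` by `(√rⱼ - √cⱼ)²` and changes the
other partial derivatives by `|rⱼ - cⱼ|` in total. Hence the `ℓ¹`-norm of the gradient after a
cycle is at most the sum of the imbalances `|rᵢ - cᵢ|` met by its updates. Writing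
`|r - c| = (√r - √c)² + 2 |√r - √c| √(min r c)` and applying Cauchy–Schwarz bounds this sum by
`D + 4 √(D φ)`, where `D` is the decrease of `φ` over the cycle: each `min rᵢ cᵢ` is at most the
row and column sums of `i` at the start plus those at the end of the cycle, so these minima add up
to at most `4 φ`. Thus `‖∇φ‖₁² ≤ 25 φ D` after each cycle, and every cycle ending at a point that
is not `ε`-balanced shrinks `φ` by the factor `1 - ε²/100`; since `φ ≥ φ*`, this happens only
`O(log (φ(u₀)/φ*) / ε²)` times.
-/

namespace Osborne

lemma exp_half_log_sub_mul {r c : ℝ} (hr : 0 < r) (hc : 0 < c) :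
    exp (1 / 2 * (log c - log r)) * r = √r * √c := by
  have hsr : √r ≠ 0 := (sqrt_pos.2 hr).ne'
  rw [one_div_mul_eq_div, exp_half, exp_sub, exp_log hc, exp_log hr, sqrt_div' _ hr.le,
    div_mul_eq_mul_div, div_eq_iff hsr, mul_comm √r, mul_assoc, mul_self_sqrt hr.le]

lemma abs_mul_sub_sq_add_abs_mul_sub_sq {a b : ℝ} (ha : 0 ≤ a) (hb : 0 ≤ b) :
    |a * b - b ^ 2| + |a * b - a ^ 2| = |a ^ 2 - b ^ 2| := by
  rw [show a * b - b ^ 2 = b * (a - b) by ring, show a * b - a ^ 2 = -(a * (a - b)) by ring,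
    show a ^ 2 - b ^ 2 = (a + b) * (a - b) by ring, abs_neg, abs_mul, abs_mul, abs_mul,
    abs_of_nonneg ha, abs_of_nonneg hb, abs_of_nonneg (add_nonneg ha hb)]
  ring

lemma abs_sub_eq_sq_sub_sqrt_add {r c : ℝ} (hr : 0 ≤ r) (hc : 0 ≤ c) :
    |r - c| = (√r - √c) ^ 2 + 2 * |√r - √c| * √(min r c) := by
  rcases le_total r c with h | h
  · have hs : √r ≤ √c := sqrt_le_sqrt h
    rw [min_eq_left h, abs_of_nonpos (by linarith), abs_of_nonpos (by linarith),
      ← sq_sqrt hr, ← sq_sqrt hc, sqrt_sq (sqrt_nonneg _), sqrt_sq (sqrt_nonneg _)]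
    ring
  · have hs : √c ≤ √r := sqrt_le_sqrt h
    rw [min_eq_right h, abs_of_nonneg (by linarith), abs_of_nonneg (by linarith),
      ← sq_sqrt hr, ← sq_sqrt hc, sqrt_sq (sqrt_nonneg _), sqrt_sq (sqrt_nonneg _)]
    ring

lemma sq_le_of_le_add_mul_sqrt {G D φ : ℝ} (hD : 0 ≤ D) (hDφ : D ≤ φ)
    (hG : G ≤ D + 4 * √D * √φ) (hG₀ : 0 ≤ G) : G ^ 2 ≤ 25 * φ * D := by
  have hDD : D ≤ √D * √φ :=
    (mul_self_sqrt hD).symm.trans_le (mul_le_mul_of_nonneg_left (sqrt_le_sqrt hDφ) (sqrt_nonneg D))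
  have h5 : G ≤ 5 * (√D * √φ) := by linarith
  calc G ^ 2 ≤ (5 * (√D * √φ)) ^ 2 := pow_le_pow_left₀ hG₀ h5 2
    _ = 25 * φ * D := by
      rw [mul_pow, mul_pow, sq_sqrt hD, sq_sqrt (hD.trans hDφ)]
      ring

lemma sum_exp_mul_le_of_le_max {ι : Type*} [Fintype ι] {a x y z : ι → ℝ} (ha : ∀ b, 0 ≤ a b)
    (h : ∀ b, x b ≤ max (y b) (z b)) :
    ∑ b, exp (x b) * a b ≤ ∑ b, exp (y b) * a b + ∑ b, exp (z b) * a b := by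
  rw [← sum_add_distrib]
  refine sum_le_sum fun b _ => ?_
  rw [← add_mul]
  refine mul_le_mul_of_nonneg_right ?_ (ha b)
  rcases le_max_iff.1 (h b) with hb | hb
  · linarith [exp_le_exp.2 hb, exp_pos (z b)]
  · linarith [exp_le_exp.2 hb, exp_pos (y b)]

lemma le_one_sub_mul_of_sq_lt {a b c ε : ℝ} (ha : 0 < a) (hc : 0 < c)
    (hεc : ε ^ 2 ≤ 2 * c) (h : (ε * b) ^ 2 < c * a * (a - b)) :
    b ≤ (1 - ε ^ 2 / (4 * c)) * a := by
  rw [sub_mul, one_mul, div_mul_eq_mul_div, le_sub_comm, div_le_iff₀ (by positivity)]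
  rcases le_or_gt b (a / 2) with hb2 | hb2
  · nlinarith
  · have hab : a ^ 2 ≤ 4 * b ^ 2 := by nlinarith
    have : ε ^ 2 * a * a < (a - b) * (4 * c) * a := by
      nlinarith [mul_le_mul_of_nonneg_left hab (sq_nonneg ε)]
    exact (lt_of_mul_lt_mul_right this ha.le).le

lemma mul_le_log_div_of_le_one_sub_pow {m Φ₀ η : ℝ} {k : ℕ} (hm : 0 < m) (hη : η ≤ 1)
    (h : m ≤ (1 - η) ^ k * Φ₀) : k * η ≤ log (Φ₀ / m) := by
  have hpow : (1 - η) ^ k ≤ exp (-(k * η)) := by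
    rw [← mul_neg, exp_nat_mul]
    exact pow_le_pow_left₀ (sub_nonneg.2 hη) (by linarith [add_one_le_exp (-η)]) k
  have hΦ₀ : 0 < Φ₀ := pos_of_mul_pos_right (hm.trans_le h) (by positivity)
  rw [le_log_iff_exp_le (div_pos hΦ₀ hm), le_div_iff₀ hm]
  calc exp (k * η) * m ≤ exp (k * η) * (exp (-(k * η)) * Φ₀) := by gcongr; exact h.trans (by gcongr)
    _ = Φ₀ := by rw [← mul_assoc, ← exp_add, add_neg_cancel, exp_zero, one_mul]

/-- As long as `G t ≤ ε Φ t` fails, `Φ` decreases geometrically with ratio `1 - ε² / (4c)`. -/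
theorem exists_le_mul_of_sq_le_mul_sub {Φ G : ℕ → ℝ} {m c ε : ℝ} (hm : 0 < m)
    (hΦ : ∀ k, m ≤ Φ k) (hε : 0 < ε) (hεc : ε ^ 2 ≤ 2 * c)
    (hstep : ∀ k, G (k + 1) ^ 2 ≤ c * Φ k * (Φ k - Φ (k + 1))) :
    ∃ t : ℕ, (t : ℝ) ≤ 4 * c * (logb 2 (Φ 0 / m) + 1) / ε ^ 2 ∧ G t ≤ ε * Φ t := by
  have hc : 0 < c := by nlinarith [pow_pos hε 2]
  have hΦpos : ∀ k, 0 < Φ k := fun k => hm.trans_le (hΦ k)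
  set η := ε ^ 2 / (4 * c)
  have hη : 0 < η := by positivity
  have hη1 : η ≤ 1 := by rw [div_le_one (by positivity)]; linarith
  set L := log (Φ 0 / m)
  have hL : 0 ≤ L := log_nonneg ((one_le_div hm).2 (hΦ 0))
  have hLb : L ≤ logb 2 (Φ 0 / m) := by
    rw [logb, le_div_iff₀ (log_pos one_lt_two)]
    exact mul_le_of_le_one_right hL (by linarith [log_two_lt_d9])
  by_contra! hfail
  set N := ⌊L / η⌋₊ + 1
  have hN : (N : ℝ) ≤ 4 * c * (logb 2 (Φ 0 / m) + 1) / ε ^ 2 := by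
    have h1 : (⌊L / η⌋₊ : ℝ) ≤ L / η := Nat.floor_le (by positivity)
    have h2 : L / η = 4 * c * L / ε ^ 2 := by rw [div_div_eq_mul_div]; ring
    have h3 : (1 : ℝ) ≤ 4 * c / ε ^ 2 := by rw [le_div_iff₀ (by positivity)]; linarith
    have h4 : 4 * c * L / ε ^ 2 ≤ 4 * c * logb 2 (Φ 0 / m) / ε ^ 2 := by gcongr
    have h5 : 4 * c * (logb 2 (Φ 0 / m) + 1) / ε ^ 2
        = 4 * c * logb 2 (Φ 0 / m) / ε ^ 2 + 4 * c / ε ^ 2 := by ring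
    push_cast [N]
    linarith
  have hdecay : Φ N ≤ (1 - η) ^ N * Φ 0 := by
    refine le_geom (sub_nonneg.2 hη1) N fun k hk => ?_
    have hfail' := hfail (k + 1) (le_trans (by exact_mod_cast hk) hN)
    exact le_one_sub_mul_of_sq_lt (hΦpos k) hc hεc
      ((pow_lt_pow_left₀ hfail' (mul_pos hε (hΦpos _)).le two_ne_zero).trans_le (hstep k))
  have hNL := mul_le_log_div_of_le_one_sub_pow hm hη1 ((hΦ N).trans hdecay)
  have hfloor := Nat.lt_floor_add_one (L / η)
  rw [div_lt_iff₀ hη] at hfloor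
  push_cast [N] at hNL
  linarith

variable {n : ℕ} {A : Matrix (Fin n) (Fin n) ℝ}

/-- `∂φ/∂u_j`, the `j`-th entry of the paper's `∇φ(u)`. -/
noncomputable def grad (A : Matrix (Fin n) (Fin n) ℝ) (u : Fin n → ℝ) (j : Fin n) : ℝ :=
  rowSum A u j - colSum A u j

lemma rowSum_nonneg (hA : ∀ i j, 0 ≤ A i j) (u : Fin n → ℝ) (j : Fin n) : 0 ≤ rowSum A u j :=
  sum_nonneg fun i _ => mul_nonneg (exp_pos _).le (hA j i)

lemma colSum_nonneg (hA : ∀ i j, 0 ≤ A i j) (u : Fin n → ℝ) (j : Fin n) : 0 ≤ colSum A u j :=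
  sum_nonneg fun i _ => mul_nonneg (exp_pos _).le (hA i j)

lemma rowSum_pos (hA : ∀ i j, 0 ≤ A i j) {j : Fin n} (hj : ∃ i, A j i ≠ 0) (u : Fin n → ℝ) :
    0 < rowSum A u j := by
  obtain ⟨i, hi⟩ := hj
  exact sum_pos' (fun i _ => mul_nonneg (exp_pos _).le (hA j i))
    ⟨i, mem_univ i, mul_pos (exp_pos _) ((hA j i).lt_of_ne' hi)⟩

lemma colSum_pos (hA : ∀ i j, 0 ≤ A i j) {j : Fin n} (hj : ∃ i, A i j ≠ 0) (u : Fin n → ℝ) :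
    0 < colSum A u j := by
  obtain ⟨i, hi⟩ := hj
  exact sum_pos' (fun i _ => mul_nonneg (exp_pos _).le (hA i j))
    ⟨i, mem_univ i, mul_pos (exp_pos _) ((hA i j).lt_of_ne' hi)⟩

lemma potential_eq_sum_rowSum (u : Fin n → ℝ) : potential A u = ∑ j, rowSum A u j := rfl

lemma potential_eq_sum_colSum (u : Fin n → ℝ) : potential A u = ∑ j, colSum A u j :=
  sum_comm

lemma potential_nonneg (hA : ∀ i j, 0 ≤ A i j) (u : Fin n → ℝ) : 0 ≤ potential A u :=
  sum_nonneg fun j _ => rowSum_nonneg hA u j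

lemma potential_pos [NeZero n] (hA : ∀ i j, 0 ≤ A i j) (hrow : ∀ j : Fin n, ∃ i, A j i ≠ 0)
    (u : Fin n → ℝ) : 0 < potential A u :=
  (rowSum_pos hA (hrow 0) u).trans_le <|
    single_le_sum (fun j _ => rowSum_nonneg hA u j) (mem_univ 0)

section Shift

variable (v : Fin n → ℝ) (j : Fin n) (δ : ℝ)

lemma rowSum_update_add_self (hdiag : ∀ i, A i i = 0) :
    rowSum A (Function.update v j (v j + δ)) j = exp δ * rowSum A v j := by
  rw [rowSum, rowSum, mul_sum]
  refine sum_congr rfl fun i _ => ?_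
  rcases eq_or_ne i j with rfl | hij
  · simp [hdiag]
  · rw [Function.update_self, Function.update_of_ne hij, ← mul_assoc, ← exp_add]
    ring_nf

lemma colSum_update_add_self (hdiag : ∀ i, A i i = 0) :
    colSum A (Function.update v j (v j + δ)) j = exp (-δ) * colSum A v j := by
  rw [colSum, colSum, mul_sum]
  refine sum_congr rfl fun i _ => ?_
  rcases eq_or_ne i j with rfl | hij
  · simp [hdiag]
  · rw [Function.update_self, Function.update_of_ne hij, ← mul_assoc, ← exp_add]
    ring_nf

variable {j} {m : Fin n}

lemma rowSum_update_add_of_ne (hm : m ≠ j) :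
    rowSum A (Function.update v j (v j + δ)) m
      = rowSum A v m + (exp (-δ) - 1) * (exp (v m - v j) * A m j) := by
  simp only [rowSum]
  rw [← add_sum_erase _ _ (mem_univ j), ← add_sum_erase _ _ (mem_univ j),
    Function.update_self, Function.update_of_ne hm]
  have hrest : ∀ i ∈ univ.erase j, exp (v m - Function.update v j (v j + δ) i) * A m i
      = exp (v m - v i) * A m i := fun i hi => by
    rw [Function.update_of_ne (ne_of_mem_erase hi)]
  rw [sum_congr rfl hrest, show v m - (v j + δ) = -δ + (v m - v j) by ring, exp_add]
  ring

lemma colSum_update_add_of_ne (hm : m ≠ j) :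
    colSum A (Function.update v j (v j + δ)) m
      = colSum A v m + (exp δ - 1) * (exp (v j - v m) * A j m) := by
  simp only [colSum]
  rw [← add_sum_erase _ _ (mem_univ j), ← add_sum_erase _ _ (mem_univ j),
    Function.update_self, Function.update_of_ne hm]
  have hrest : ∀ i ∈ univ.erase j, exp (Function.update v j (v j + δ) i - v m) * A i m
      = exp (v i - v m) * A i m := fun i hi => by
    rw [Function.update_of_ne (ne_of_mem_erase hi)]
  rw [sum_congr rfl hrest, show v j + δ - v m = δ + (v j - v m) by ring, exp_add]
  ring

lemma abs_grad_update_add_le_of_ne (hA : ∀ i j, 0 ≤ A i j) (hm : m ≠ j) :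
    |grad A (Function.update v j (v j + δ)) m|
      ≤ |grad A v m| + |exp (-δ) - 1| * (exp (v m - v j) * A m j)
        + |exp δ - 1| * (exp (v j - v m) * A j m) := by
  rw [grad, grad, rowSum_update_add_of_ne _ _ hm, colSum_update_add_of_ne _ _ hm]
  calc _ = |(rowSum A v m - colSum A v m) + (exp (-δ) - 1) * (exp (v m - v j) * A m j)
          - (exp δ - 1) * (exp (v j - v m) * A j m)| := by ring_nf
    _ ≤ |rowSum A v m - colSum A v m| + |(exp (-δ) - 1) * (exp (v m - v j) * A m j)|
          + |(exp δ - 1) * (exp (v j - v m) * A j m)| :=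
      (abs_sub _ _).trans (by gcongr; exact abs_add_le _ _)
    _ = _ := by
      rw [abs_mul (exp (-δ) - 1), abs_mul (exp δ - 1),
        abs_of_nonneg (mul_nonneg (exp_pos _).le (hA m j)),
        abs_of_nonneg (mul_nonneg (exp_pos _).le (hA j m))]

variable (j)

lemma potential_update_add (hdiag : ∀ i, A i i = 0) :
    potential A (Function.update v j (v j + δ))
      = potential A v + (exp δ - 1) * rowSum A v j + (exp (-δ) - 1) * colSum A v j := by
  have hcol : ∑ m ∈ univ.erase j, exp (v m - v j) * A m j = colSum A v j := by
    rw [colSum, ← add_sum_erase _ _ (mem_univ j), hdiag, mul_zero, zero_add]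
  rw [potential_eq_sum_rowSum, potential_eq_sum_rowSum, ← add_sum_erase _ _ (mem_univ j),
    ← add_sum_erase _ _ (mem_univ j), rowSum_update_add_self v j δ hdiag,
    sum_congr rfl fun m hm => rowSum_update_add_of_ne v δ (ne_of_mem_erase hm),
    sum_add_distrib, ← mul_sum, hcol]
  ring

end Shift

noncomputable def osborneShift (A : Matrix (Fin n) (Fin n) ℝ) (v : Fin n → ℝ) (j : Fin n) : ℝ :=
  1 / 2 * (log (colSum A v j) - log (rowSum A v j))

lemma osborneUpdate_eq (v : Fin n → ℝ) (j : Fin n) :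
    osborneUpdate A v j = Function.update v j (v j + osborneShift A v j) := rfl

section Update

variable {v : Fin n → ℝ} {j : Fin n}

lemma exp_osborneShift_mul_rowSum (hr : 0 < rowSum A v j) (hc : 0 < colSum A v j) :
    exp (osborneShift A v j) * rowSum A v j = √(rowSum A v j) * √(colSum A v j) :=
  exp_half_log_sub_mul hr hc

lemma exp_neg_osborneShift_mul_colSum (hr : 0 < rowSum A v j) (hc : 0 < colSum A v j) :
    exp (-osborneShift A v j) * colSum A v j = √(rowSum A v j) * √(colSum A v j) := by
  rw [osborneShift, ← mul_neg, neg_sub, exp_half_log_sub_mul hc hr, mul_comm]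

lemma grad_osborneUpdate_self (hdiag : ∀ i, A i i = 0) (hr : 0 < rowSum A v j)
    (hc : 0 < colSum A v j) : grad A (osborneUpdate A v j) j = 0 := by
  rw [grad, osborneUpdate_eq, rowSum_update_add_self _ _ _ hdiag,
    colSum_update_add_self _ _ _ hdiag, exp_osborneShift_mul_rowSum hr hc,
    exp_neg_osborneShift_mul_colSum hr hc, sub_self]

lemma potential_osborneUpdate (hdiag : ∀ i, A i i = 0) (hr : 0 < rowSum A v j)
    (hc : 0 < colSum A v j) :
    potential A (osborneUpdate A v j)
      = potential A v - (√(rowSum A v j) - √(colSum A v j)) ^ 2 := by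
  rw [osborneUpdate_eq, potential_update_add _ _ _ hdiag, sub_one_mul, sub_one_mul,
    exp_osborneShift_mul_rowSum hr hc, exp_neg_osborneShift_mul_colSum hr hc,
    ← sq_sqrt hr.le, ← sq_sqrt hc.le, sqrt_sq (sqrt_nonneg _), sqrt_sq (sqrt_nonneg _)]
  ring

lemma sum_abs_grad_osborneUpdate_le (hA : ∀ i j, 0 ≤ A i j) (hr : 0 < rowSum A v j)
    (hc : 0 < colSum A v j) {s : Finset (Fin n)} (hj : j ∉ s) :
    ∑ m ∈ s, |grad A (osborneUpdate A v j) m| ≤ ∑ m ∈ s, |grad A v m| + |grad A v j| := by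
  set δ := osborneShift A v j
  set e : Fin n → ℝ := fun m =>
    |exp (-δ) - 1| * (exp (v m - v j) * A m j) + |exp δ - 1| * (exp (v j - v m) * A j m)
  have he : ∀ m, 0 ≤ e m := fun m => add_nonneg
    (mul_nonneg (abs_nonneg _) (mul_nonneg (exp_pos _).le (hA _ _)))
    (mul_nonneg (abs_nonneg _) (mul_nonneg (exp_pos _).le (hA _ _)))
  have hstep : ∀ m ∈ s, |grad A (osborneUpdate A v j) m| ≤ |grad A v m| + e m := fun m hm =>
    (abs_grad_update_add_le_of_ne v δ hA (ne_of_mem_of_not_mem hm hj)).trans_eq (add_assoc _ _ _)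
  have hsum : ∑ m, e m = |grad A v j| := by
    have habs : ∀ x c : ℝ, 0 < c → |x - 1| * c = |x * c - c| := fun x c hc => by
      rw [← sub_one_mul, abs_mul, abs_of_pos hc]
    simp only [e, sum_add_distrib, ← mul_sum]
    change |exp (-δ) - 1| * colSum A v j + |exp δ - 1| * rowSum A v j = _
    rw [habs _ _ hc, habs _ _ hr, exp_osborneShift_mul_rowSum hr hc,
      exp_neg_osborneShift_mul_colSum hr hc, grad, ← sq_sqrt hr.le, ← sq_sqrt hc.le,
      sqrt_sq (sqrt_nonneg _), sqrt_sq (sqrt_nonneg _)]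
    exact abs_mul_sub_sq_add_abs_mul_sub_sq (sqrt_nonneg _) (sqrt_nonneg _)
  calc ∑ m ∈ s, |grad A (osborneUpdate A v j) m|
      ≤ ∑ m ∈ s, (|grad A v m| + e m) := sum_le_sum hstep
    _ ≤ ∑ m ∈ s, |grad A v m| + ∑ m, e m := by
      rw [sum_add_distrib]
      gcongr
      exacts [fun m _ _ => he m, subset_univ s]
    _ = _ := by rw [hsum]

lemma osborneShift_nonneg_of_rowSum_le (hr : 0 < rowSum A v j)
    (h : rowSum A v j ≤ colSum A v j) : 0 ≤ osborneShift A v j :=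
  mul_nonneg one_half_pos.le (sub_nonneg.2 (log_le_log hr h))

lemma osborneShift_nonpos_of_colSum_le (hc : 0 < colSum A v j)
    (h : colSum A v j ≤ rowSum A v j) : osborneShift A v j ≤ 0 :=
  mul_nonpos_of_nonneg_of_nonpos one_half_pos.le (sub_nonpos.2 (log_le_log hc h))

end Update

noncomputable def partialCycle (A : Matrix (Fin n) (Fin n) ℝ) (u : Fin n → ℝ) (k : ℕ) :
    Fin n → ℝ :=
  ((List.finRange n).take k).foldl (osborneUpdate A) u

section PartialCycle

variable (u : Fin n → ℝ)

lemma partialCycle_zero : partialCycle A u 0 = u := rfl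

lemma partialCycle_succ {k : ℕ} (hk : k < n) :
    partialCycle A u (k + 1) = osborneUpdate A (partialCycle A u k) ⟨k, hk⟩ := by
  simp [partialCycle, List.take_add_one, hk]

lemma osborneCycle_eq_partialCycle : osborneCycle A u = partialCycle A u n := by
  rw [partialCycle, List.take_of_length_le (List.length_finRange).le, osborneCycle]

lemma partialCycle_apply_of_le {k : ℕ} {j : Fin n} (h : k ≤ j) : partialCycle A u k j = u j := by
  induction k with
  | zero => rfl
  | succ k ih =>
    rw [partialCycle_succ u (by omega), osborneUpdate, Function.update_of_ne (by grind),
      ih (by omega)]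

lemma partialCycle_apply_of_lt {j : Fin n} {k : ℕ} (h : j < k) (hk : k ≤ n) :
    partialCycle A u k j = partialCycle A u (j + 1) j := by
  induction k, h using Nat.le_induction with
  | base => rfl
  | succ k hjk ih =>
    rw [partialCycle_succ u (by omega), osborneUpdate, Function.update_of_ne (by grind),
      ih (by omega)]

lemma partialCycle_succ_apply_self (j : Fin n) :
    partialCycle A u (j + 1) j = partialCycle A u j j + osborneShift A (partialCycle A u j) j := by
  rw [partialCycle_succ u j.isLt, osborneUpdate_eq, Fin.eta, Function.update_self]

lemma filter_val_lt_succ {k : ℕ} (hk : k < n) :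
    univ.filter (fun i : Fin n => (i : ℕ) < k + 1)
      = insert ⟨k, hk⟩ (univ.filter fun i : Fin n => (i : ℕ) < k) := by
  ext i
  simp only [mem_filter, mem_insert, mem_univ, true_and, Fin.ext_iff]
  omega

lemma potential_partialCycle (hA : ∀ i j, 0 ≤ A i j) (hdiag : ∀ i, A i i = 0)
    (hrow : ∀ j : Fin n, ∃ i, A j i ≠ 0) (hcol : ∀ j : Fin n, ∃ i, A i j ≠ 0)
    {k : ℕ} (hk : k ≤ n) :
    potential A (partialCycle A u k)
      = potential A u - ∑ i ∈ univ.filter (fun i : Fin n => (i : ℕ) < k),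
        (√(rowSum A (partialCycle A u i) i) - √(colSum A (partialCycle A u i) i)) ^ 2 := by
  induction k with
  | zero => simp [partialCycle_zero]
  | succ k ih =>
    rw [partialCycle_succ u hk, potential_osborneUpdate hdiag (rowSum_pos hA (hrow _) _)
      (colSum_pos hA (hcol _) _), ih (by omega), filter_val_lt_succ hk, sum_insert (by simp)]
    ring

lemma sum_abs_grad_partialCycle_le (hA : ∀ i j, 0 ≤ A i j) (hdiag : ∀ i, A i i = 0)
    (hrow : ∀ j : Fin n, ∃ i, A j i ≠ 0) (hcol : ∀ j : Fin n, ∃ i, A i j ≠ 0)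
    {k : ℕ} (hk : k ≤ n) :
    ∑ j ∈ univ.filter (fun j : Fin n => (j : ℕ) < k), |grad A (partialCycle A u k) j|
      ≤ ∑ i ∈ univ.filter (fun i : Fin n => (i : ℕ) < k), |grad A (partialCycle A u i) i| := by
  induction k with
  | zero => simp
  | succ k ih =>
    have hr := rowSum_pos hA (hrow ⟨k, hk⟩) (partialCycle A u k)
    have hc := colSum_pos hA (hcol ⟨k, hk⟩) (partialCycle A u k)
    rw [filter_val_lt_succ hk, sum_insert (by simp), sum_insert (by simp), partialCycle_succ u hk,
      grad_osborneUpdate_self hdiag hr hc, abs_zero, zero_add, add_comm]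
    exact (sum_abs_grad_osborneUpdate_le hA hr hc (by simp)).trans
      (add_le_add_left (ih (by omega)) _)

/-- The update of `i` moves `u i` in the direction that increases the smaller of its two sums, and
every coordinate it is compared with is either not yet updated or already final. -/
lemma min_rowSum_colSum_partialCycle_le (hA : ∀ i j, 0 ≤ A i j)
    (hrow : ∀ j : Fin n, ∃ i, A j i ≠ 0) (hcol : ∀ j : Fin n, ∃ i, A i j ≠ 0) (i : Fin n) :
    min (rowSum A (partialCycle A u i) i) (colSum A (partialCycle A u i) i)
      ≤ rowSum A (partialCycle A u n) i + colSum A (partialCycle A u n) i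
        + (rowSum A u i + colSum A u i) := by
  have hv : ∀ b : Fin n, (i : ℕ) ≤ b → partialCycle A u i b = u b := fun b hb =>
    partialCycle_apply_of_le u hb
  have hw : ∀ b : Fin n, (b : ℕ) < i → partialCycle A u n b = partialCycle A u i b := fun b hb => by
    rw [partialCycle_apply_of_lt u b.isLt le_rfl, partialCycle_apply_of_lt u hb i.isLt.le]
  have hwi : partialCycle A u n i
      = partialCycle A u i i + osborneShift A (partialCycle A u i) i := by
    rw [partialCycle_apply_of_lt u i.isLt le_rfl, partialCycle_succ_apply_self]
  set v := partialCycle A u i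
  set w := partialCycle A u n
  have hr := rowSum_nonneg hA w i
  have hc := colSum_nonneg hA w i
  have hr₀ := rowSum_nonneg hA u i
  have hc₀ := colSum_nonneg hA u i
  rcases le_total (rowSum A v i) (colSum A v i) with hrc | hcr
  · have hδ : 0 ≤ osborneShift A v i :=
      osborneShift_nonneg_of_rowSum_le (rowSum_pos hA (hrow i) v) hrc
    have : rowSum A v i ≤ rowSum A w i + rowSum A u i := by
      refine sum_exp_mul_le_of_le_max (hA i) fun b => ?_
      rcases lt_or_ge (b : ℕ) i with hb | hb
      · exact le_max_of_le_left (by rw [hwi, hw b hb]; linarith)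
      · exact le_max_of_le_right (by rw [hv i le_rfl, hv b hb])
    rw [min_eq_left hrc]
    linarith
  · have hδ : osborneShift A v i ≤ 0 :=
      osborneShift_nonpos_of_colSum_le (colSum_pos hA (hcol i) v) hcr
    have : colSum A v i ≤ colSum A w i + colSum A u i := by
      refine sum_exp_mul_le_of_le_max (fun b => hA b i) fun b => ?_
      rcases lt_or_ge (b : ℕ) i with hb | hb
      · exact le_max_of_le_left (by rw [hwi, hw b hb]; linarith)
      · exact le_max_of_le_right (by rw [hv i le_rfl, hv b hb])
    rw [min_eq_right hcr]
    linarith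

lemma sum_min_rowSum_colSum_partialCycle_le (hA : ∀ i j, 0 ≤ A i j) (hdiag : ∀ i, A i i = 0)
    (hrow : ∀ j : Fin n, ∃ i, A j i ≠ 0) (hcol : ∀ j : Fin n, ∃ i, A i j ≠ 0) :
    ∑ i : Fin n, min (rowSum A (partialCycle A u i) i) (colSum A (partialCycle A u i) i)
      ≤ 4 * potential A u := by
  have hw : potential A (partialCycle A u n) ≤ potential A u := by
    rw [potential_partialCycle u hA hdiag hrow hcol le_rfl, sub_le_self_iff]
    exact sum_nonneg fun i _ => sq_nonneg _
  calc _ ≤ ∑ i : Fin n, (rowSum A (partialCycle A u n) i + colSum A (partialCycle A u n) i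
          + (rowSum A u i + colSum A u i)) :=
        sum_le_sum fun i _ => min_rowSum_colSum_partialCycle_le u hA hrow hcol i
    _ = 2 * potential A (partialCycle A u n) + 2 * potential A u := by
      simp only [sum_add_distrib, ← potential_eq_sum_rowSum, ← potential_eq_sum_colSum]
      ring
    _ ≤ 4 * potential A u := by linarith

end PartialCycle

theorem sq_sum_abs_grad_osborneCycle_le (hA : ∀ i j, 0 ≤ A i j) (hdiag : ∀ i, A i i = 0)
    (hrow : ∀ j : Fin n, ∃ i, A j i ≠ 0) (hcol : ∀ j : Fin n, ∃ i, A i j ≠ 0) (u : Fin n → ℝ) :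
    (∑ j, |grad A (osborneCycle A u) j|) ^ 2
      ≤ 25 * potential A u * (potential A u - potential A (osborneCycle A u)) := by
  have hall : univ.filter (fun i : Fin n => (i : ℕ) < n) = univ :=
    filter_true_of_mem fun i _ => i.isLt
  have hG := sum_abs_grad_partialCycle_le u hA hdiag hrow hcol le_rfl
  have hφ := potential_partialCycle u hA hdiag hrow hcol le_rfl
  have hM := sum_min_rowSum_colSum_partialCycle_le u hA hdiag hrow hcol
  rw [hall] at hG hφ
  rw [osborneCycle_eq_partialCycle]
  set r : Fin n → ℝ := fun i => rowSum A (partialCycle A u i) i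
  set c : Fin n → ℝ := fun i => colSum A (partialCycle A u i) i
  set D := potential A u - potential A (partialCycle A u n)
  have hD : D = ∑ i, (√(r i) - √(c i)) ^ 2 := by linarith
  have hCS : ∑ i, |√(r i) - √(c i)| * √(min (r i) (c i)) ≤ √D * (2 * √(potential A u)) := by
    have h4 : √(4 * potential A u) = 2 * √(potential A u) := by
      rw [sqrt_mul' _ (potential_nonneg hA u), show (4 : ℝ) = 2 ^ 2 by norm_num,
        sqrt_sq zero_le_two]
    refine (sum_mul_le_sqrt_mul_sqrt _ _ _).trans ?_
    have hm : ∀ i, √(min (r i) (c i)) ^ 2 = min (r i) (c i) := fun i =>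
      sq_sqrt (le_min (rowSum_nonneg hA _ _) (colSum_nonneg hA _ _))
    simp only [sq_abs, hm, ← hD, ← h4]
    gcongr
  refine sq_le_of_le_add_mul_sqrt ?_ ?_ ?_ (sum_nonneg fun _ _ => abs_nonneg _)
  · rw [hD]; exact sum_nonneg fun i _ => sq_nonneg _
  · linarith [potential_nonneg hA (partialCycle A u n)]
  · calc _ ≤ ∑ i, |r i - c i| := hG
      _ = D + 2 * ∑ i, |√(r i) - √(c i)| * √(min (r i) (c i)) := by
        rw [hD, mul_sum, ← sum_add_distrib]
        refine sum_congr rfl fun i _ => ?_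
        rw [abs_sub_eq_sq_sub_sqrt_add (rowSum_nonneg hA _ _) (colSum_nonneg hA _ _)]
        ring
      _ ≤ D + 4 * √D * √(potential A u) := by linarith

end Osborne

open Osborne in
/-- Weak convergence bound: there is a universal constant C such that for every balanceable
nonnegative matrix A, accuracy eps in (0,1), and starting point u0, cyclic Osborne produces
an eps-balanced iterate within C (log2(φ(u0)/φ*) + 1) / eps^2 cycles. -/
theorem osborne_weak_convergence :
    ∃ C : ℝ, 0 < C ∧
      ∀ (n : ℕ) (A : Matrix (Fin n) (Fin n) ℝ),
        (∀ i j, 0 ≤ A i j) → (∀ i, A i i = 0) →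
        (∀ j : Fin n, ∃ i, A j i ≠ 0) → (∀ j : Fin n, ∃ i, A i j ≠ 0) →
        ∀ ustar : Fin n → ℝ, (∀ u : Fin n → ℝ, potential A ustar ≤ potential A u) →
        (∀ i, rowSum A ustar i = colSum A ustar i) →
        ∀ (u0 : Fin n → ℝ) (eps : ℝ), 0 < eps → eps < 1 →
        ∃ t : ℕ,
          (t : ℝ) ≤ C * (Real.logb 2 (potential A u0 / potential A ustar) + 1) / eps ^ 2 ∧
          (∑ j, |rowSum A (osborneIter A u0 t) j - colSum A (osborneIter A u0 t) j|)
              / potential A (osborneIter A u0 t) ≤ eps := by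
  refine ⟨100, by norm_num, fun n A hA hdiag hrow hcol ustar hmin _ u0 eps heps heps1 => ?_⟩
  rcases Nat.eq_zero_or_pos n with rfl | hn
  · refine ⟨0, ?_, by simp [heps.le]⟩
    simp only [Nat.cast_zero, potential, univ_eq_empty, sum_empty, div_zero, logb_zero, zero_add]
    positivity
  have : NeZero n := ⟨hn.ne'⟩
  obtain ⟨t, ht, hGt⟩ := exists_le_mul_of_sq_le_mul_sub (c := 25)
    (Φ := fun k => potential A (osborneIter A u0 k))
    (G := fun k => ∑ j, |grad A (osborneIter A u0 k) j|)
    (potential_pos hA hrow ustar) (fun k => hmin _) heps (by nlinarith) fun k => by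
      simp only [osborneIter, Function.iterate_succ_apply']
      exact sq_sum_abs_grad_osborneCycle_le hA hdiag hrow hcol _
  exact ⟨t, ht.trans_eq (by norm_num [osborneIter]), (div_le_iff₀ (potential_pos hA hrow _)).2 hGt⟩
end

section
/- (Inexact Osborne step) Suppose a coordinate update on index j satisfies |e^{u'[j]-u[j]} - √(c/r)| ≤ τ √(c/r), where r = r_j(u) > 0 and c = c_j(u) > 0 are the j-th row and column sums of the scaled matrix (zero diagonal), and u' agrees with u off coordinate j. Then |r_j(u') - √(rc)| ≤ τ√(rc), |c_j(u') - √(rc)| ≤ τ√(rc), and consequently |r_j(u') - c_j(u')| ≤ 2τ√(rc). -/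
open Real Finset

/-- Inexact Osborne step: if the multiplicative update on coordinate j approximates
sqrt(c/r) (and its inverse approximates sqrt(r/c)) to relative error tau, then the new j-th
row and column sums are within tau sqrt(rc) of sqrt(rc), hence their imbalance is at most
2 tau sqrt(rc). -/
theorem inexact_osborne_step (n : ℕ) (A : Matrix (Fin n) (Fin n) ℝ)
    (hA : ∀ i j, 0 ≤ A i j) (hdiag : ∀ i, A i i = 0)
    (u u' : Fin n → ℝ) (j : Fin n)
    (hoff : ∀ i, i ≠ j → u' i = u i)
    (hr : 0 < rowSum A u j) (hc : 0 < colSum A u j)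
    (tau : ℝ) (htau0 : 0 < tau) (htau1 : tau < 1)
    (hstep : |Real.exp (u' j - u j) - Real.sqrt (colSum A u j / rowSum A u j)|
        ≤ tau * Real.sqrt (colSum A u j / rowSum A u j))
    (hstep' : |Real.exp (u j - u' j) - Real.sqrt (rowSum A u j / colSum A u j)|
        ≤ tau * Real.sqrt (rowSum A u j / colSum A u j)) :
    |rowSum A u' j - Real.sqrt (rowSum A u j * colSum A u j)|
        ≤ tau * Real.sqrt (rowSum A u j * colSum A u j) ∧
    |colSum A u' j - Real.sqrt (rowSum A u j * colSum A u j)|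
        ≤ tau * Real.sqrt (rowSum A u j * colSum A u j) ∧
    |rowSum A u' j - colSum A u' j|
        ≤ 2 * tau * Real.sqrt (rowSum A u j * colSum A u j) := by
  set r := rowSum A u j with hrdef
  set c := colSum A u j with hcdef
  -- new row sum is a multiple of old one
  have hrow : rowSum A u' j = Real.exp (u' j - u j) * r := by
    rw [hrdef]
    unfold rowSum
    rw [Finset.mul_sum]
    refine Finset.sum_congr rfl fun i _ => ?_
    by_cases hij : i = j
    · subst hij; simp [hdiag]
    · rw [hoff i hij, ← mul_assoc, ← Real.exp_add]; ring_nf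
  have hcol : colSum A u' j = Real.exp (u j - u' j) * c := by
    rw [hcdef]
    unfold colSum
    rw [Finset.mul_sum]
    refine Finset.sum_congr rfl fun i _ => ?_
    by_cases hij : i = j
    · subst hij; simp [hdiag]
    · rw [hoff i hij, ← mul_assoc, ← Real.exp_add]; ring_nf
  have sqmul : ∀ a b : ℝ, 0 < a → 0 < b → Real.sqrt (b / a) * a = Real.sqrt (a * b) := by
    intro a b ha hb
    rw [show Real.sqrt (b / a) * a = Real.sqrt (b / a) * Real.sqrt (a ^ 2) by
      rw [Real.sqrt_sq ha.le], ← Real.sqrt_mul (by positivity)]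
    congr 1
    field_simp
  have hsr : Real.sqrt (c / r) * r = Real.sqrt (r * c) := sqmul r c hr hc
  have hsc : Real.sqrt (r / c) * c = Real.sqrt (r * c) := by
    rw [sqmul c r hc hr, mul_comm]
  have h1 : |rowSum A u' j - Real.sqrt (r * c)| ≤ tau * Real.sqrt (r * c) := by
    rw [hrow, ← hsr, ← sub_mul, abs_mul, abs_of_pos hr, ← mul_assoc]
    exact mul_le_mul_of_nonneg_right hstep hr.le
  have h2 : |colSum A u' j - Real.sqrt (r * c)| ≤ tau * Real.sqrt (r * c) := by
    rw [hcol, ← hsc, ← sub_mul, abs_mul, abs_of_pos hc, ← mul_assoc]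
    exact mul_le_mul_of_nonneg_right hstep' hc.le
  refine ⟨h1, h2, ?_⟩
  calc |rowSum A u' j - colSum A u' j|
      ≤ |rowSum A u' j - Real.sqrt (r * c)| + |colSum A u' j - Real.sqrt (r * c)| := by
        rw [show rowSum A u' j - colSum A u' j =
          (rowSum A u' j - Real.sqrt (r * c)) - (colSum A u' j - Real.sqrt (r * c)) by ring]
        exact abs_sub _ _
    _ ≤ 2 * tau * Real.sqrt (r * c) := by linarith
end

section
/- (Inexact estimation of balancing criterion) Let g = ‖∇φ(u)‖₁/φ(u) = (Σ_j |r_j - c_j|)/φ with r_j, c_j, φ > 0 the row sums, column sums, and total sum of a nonnegative matrix. Suppose r̂_j, ĉ_j, φ̂ satisfy e^{-ρ} x ≤ x̂ ≤ e^{ρ} x for each corresponding quantity x, and Σ_j(r_j + c_j) = 2φ. Then ĝ := (Σ_j |r̂_j - ĉ_j|)/φ̂ satisfies e^{-ρ} g - 2e^{ρ}(e^{ρ}-1) ≤ ĝ ≤ e^{ρ} g + 2e^{ρ}(e^{ρ}-1). In particular, choosing ρ = Θ(ε̄) yields g/2 - ε̄/2 ≤ ĝ ≤ 2g + ε̄/2.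 -/
open Finset

set_option maxHeartbeats 1000000

/-- Inexact estimation of the balancing criterion: multiplicative e^rho approximations of
the row sums, column sums, and total sum yield an estimate of the normalized l1 imbalance
g accurate up to factor e^rho and additive error 2 e^rho (e^rho - 1). -/
theorem inexact_balancing_criterion (n : ℕ) (r c rh ch : Fin n → ℝ) (phi phih rho : ℝ)
    (hr : ∀ j, 0 < r j) (hc : ∀ j, 0 < c j) (hphi : 0 < phi) (hrho : 0 < rho)
    (hsum : ∑ j, (r j + c j) = 2 * phi)
    (hrh : ∀ j, Real.exp (-rho) * r j ≤ rh j ∧ rh j ≤ Real.exp rho * r j)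
    (hch : ∀ j, Real.exp (-rho) * c j ≤ ch j ∧ ch j ≤ Real.exp rho * c j)
    (hphih : Real.exp (-rho) * phi ≤ phih ∧ phih ≤ Real.exp rho * phi) :
    Real.exp (-rho) * ((∑ j, |r j - c j|) / phi) - 2 * Real.exp rho * (Real.exp rho - 1)
        ≤ (∑ j, |rh j - ch j|) / phih ∧
    (∑ j, |rh j - ch j|) / phih
        ≤ Real.exp rho * ((∑ j, |r j - c j|) / phi)
          + 2 * Real.exp rho * (Real.exp rho - 1) := by
  set E := Real.exp rho with hEdef
  set e := Real.exp (-rho) with hedef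
  have hEe : E * e = 1 := by
    rw [hEdef, hedef, ← Real.exp_add]; simp
  have hE1 : 1 ≤ E := Real.one_le_exp hrho.le
  have he0 : 0 < e := Real.exp_pos _
  have he1 : e ≤ 1 := by nlinarith
  set S := ∑ j, |r j - c j| with hSdef
  set T := ∑ j, |rh j - ch j| with hTdef
  have hS0 : 0 ≤ S := Finset.sum_nonneg fun j _ => abs_nonneg _
  have hT0 : 0 ≤ T := Finset.sum_nonneg fun j _ => abs_nonneg _
  have hS2 : S ≤ 2 * phi := by
    rw [← hsum]
    refine Finset.sum_le_sum fun j _ => ?_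
    have := hr j; have := hc j
    rw [abs_le]; constructor <;> linarith
  -- pointwise bounds
  have hpt : ∀ j, (E + e) / 2 * |r j - c j| - (E - e) / 2 * (r j + c j) ≤ |rh j - ch j|
      ∧ |rh j - ch j| ≤ (E + e) / 2 * |r j - c j| + (E - e) / 2 * (r j + c j) := by
    intro j
    obtain ⟨h1, h2⟩ := hrh j
    obtain ⟨h3, h4⟩ := hch j
    have hrj := hr j; have hcj := hc j
    rcases le_total (r j) (c j) with h | h
    · rw [abs_of_nonpos (by linarith : r j - c j ≤ 0)]
      constructor
      · have : ch j - rh j ≥ e * c j - E * r j := by linarith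
        have h5 : ch j - rh j ≤ |rh j - ch j| := by
          rw [abs_sub_comm]; exact le_abs_self _
        nlinarith
      · rw [abs_le]
        constructor
        · nlinarith
        · nlinarith
    · rw [abs_of_nonneg (by linarith : 0 ≤ r j - c j)]
      constructor
      · have : rh j - ch j ≥ e * r j - E * c j := by linarith
        have h5 : rh j - ch j ≤ |rh j - ch j| := le_abs_self _
        nlinarith
      · rw [abs_le]
        constructor
        · nlinarith
        · nlinarith
  have hTub : T ≤ (E + e) / 2 * S + (E - e) * phi := by
    have := Finset.sum_le_sum (fun j (_ : j ∈ Finset.univ) => (hpt j).2)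
    rw [hTdef]
    calc T ≤ ∑ j, ((E + e) / 2 * |r j - c j| + (E - e) / 2 * (r j + c j)) := this
      _ = (E + e) / 2 * S + (E - e) / 2 * (2 * phi) := by
          rw [Finset.sum_add_distrib, ← Finset.mul_sum, ← Finset.mul_sum, hsum]
      _ = (E + e) / 2 * S + (E - e) * phi := by ring
  have hTlb : (E + e) / 2 * S - (E - e) * phi ≤ T := by
    have := Finset.sum_le_sum (fun j (_ : j ∈ Finset.univ) => (hpt j).1)
    calc (E + e) / 2 * S - (E - e) * phi
        = ∑ j, ((E + e) / 2 * |r j - c j| - (E - e) / 2 * (r j + c j)) := by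
          rw [Finset.sum_sub_distrib, ← Finset.mul_sum, ← Finset.mul_sum, hsum]; ring
      _ ≤ T := this
  have hphih0 : 0 < phih := lt_of_lt_of_le (mul_pos he0 hphi) hphih.1
  constructor
  · -- lower bound
    have step1 : T / (E * phi) ≤ T / phih :=
      div_le_div_of_nonneg_left hT0 hphih0 hphih.2
    refine le_trans ?_ step1
    rw [le_div_iff₀ (mul_pos (by positivity) hphi)]
    have hsp : S / phi * phi = S := div_mul_cancel₀ _ hphi.ne'
    have hkey : (e * (S / phi) - 2 * E * (E - 1)) * (E * phi)
        = S - 2 * E * E * (E - 1) * phi := by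
      linear_combination e * E * hsp + S * hEe
    rw [hkey]
    -- need: S - 2E²(E-1)φ ≤ T, using hTlb
    have hEe2 : 0 ≤ E + e - 2 := by
      nlinarith [mul_nonneg (sub_nonneg.2 hE1) (sub_nonneg.2 he1), hEe]
    have hc2 : 0 ≤ 2 * E * E * (E - 1) - (E - e) := by
      nlinarith [mul_nonneg (sub_nonneg.2 hE1) (by nlinarith : (0:ℝ) ≤ 2 * E * E - 1 - e),
        hEe]
    nlinarith [mul_nonneg hEe2 hS0, mul_nonneg hc2 hphi.le, hTlb]
  · -- upper bound
    have step1 : T / phih ≤ T / (e * phi) :=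
      div_le_div_of_nonneg_left hT0 (mul_pos he0 hphi) hphih.1
    refine le_trans step1 ?_
    rw [div_le_iff₀ (mul_pos he0 hphi)]
    -- need: T ≤ (E(S/φ) + 2E(E-1)) e φ = eES + 2eE(E-1)eφ... careful
    have hsp : S / phi * phi = S := div_mul_cancel₀ _ hphi.ne'
    have hkey : (E * (S / phi) + 2 * E * (E - 1)) * (e * phi)
        = S + 2 * E * (E - 1) * e * phi := by
      linear_combination E * e * hsp + S * hEe
    rw [hkey]
    -- From hTub: T ≤ (E+e)/2 S + (E-e)φ; need ≤ S + 2E(E-1)eφ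
    have hEe2 : 0 ≤ E + e - 2 := by
      nlinarith [mul_nonneg (sub_nonneg.2 hE1) (sub_nonneg.2 he1), hEe]
    have h2e : 2 * E * (E - 1) * e * phi = (2 * E - 2) * phi := by
      linear_combination (2 * E - 2) * phi * hEe
    nlinarith [mul_nonneg hEe2 (by linarith : 0 ≤ 2 * phi - S), hTub, h2e]
end
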